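/- arXiv:1504.03222 — 3 statements merged into one kernel-verified Lean document; each statement's English description precedes it below -/
import Mathlib

section
/- Let A be an associative unital ring and let s1, s2 ∈ A be idempotents (s1² = s1 and s2² = s2). Then for every integer j ≥ 1 one has ⟨1−s1, 1−s2⟩^j = 1 + Σ_{i=1}^{j−1} (−1)^i (⟨s1,s2⟩^i + ⟨s2,s1⟩^i) + (−1)^j ⟨s1,s2⟩^j, and symmetrically ⟨1−s2, 1−s1⟩^j = 1 + Σ_{i=1}^{j−1} (−1)^i (⟨s1,s2⟩^i + ⟨s2,s1⟩^i) + (−1)^j ⟨s2,s1⟩^j. -/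
/-- The alternating product `⟨t,s⟩^k` with `k` factors whose rightmost factor is `s`:
`⟨t,s⟩^{2i} = (ts)^i` and `⟨t,s⟩^{2i+1} = s(ts)^i`. -/
def altProd {A : Type*} [Monoid A] (t s : A) (k : ℕ) : A :=
  if Even k then (t * s) ^ (k / 2) else s * (t * s) ^ (k / 2)

lemma pow_swap {A : Type*} [Monoid A] (t s : A) (m : ℕ) :
    (s * t) ^ m * s = s * (t * s) ^ m := by
  induction m with
  | zero => simp
  | succ n ih =>
      rw [pow_succ', mul_assoc, ih, pow_succ']
      simp [mul_assoc]

lemma altProd_one' {A : Type*} [Monoid A] (t s : A) : altProd t s 1 = s := by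
  simp [altProd]

lemma altProd_succ {A : Type*} [Monoid A] (t s : A) (k : ℕ) :
    altProd t s (k + 1) = altProd s t k * s := by
  rcases Nat.even_or_odd k with ⟨m, hm⟩ | ⟨m, hm⟩
  · subst hm
    have he : Even (m + m) := ⟨m, rfl⟩
    have ho : ¬ Even (m + m + 1) := by simp [Nat.even_add_one, he]
    have hd1 : (m + m + 1) / 2 = m := by omega
    have hd2 : (m + m) / 2 = m := by omega
    rw [altProd, altProd, if_neg ho, if_pos he, hd1, hd2, pow_swap]
  · subst hm
    have ho : ¬ Even (2 * m + 1) := by simp [Nat.even_add_one]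
    have he : Even (2 * m + 1 + 1) := by refine ⟨m + 1, by ring⟩
    have hd1 : (2 * m + 1 + 1) / 2 = m + 1 := by omega
    have hd2 : (2 * m + 1) / 2 = m := by omega
    rw [altProd, altProd, if_pos he, if_neg ho, hd1, hd2, mul_assoc, pow_swap,
      ← mul_assoc, ← pow_succ']

lemma altProd_mul_self {A : Type*} [Monoid A] (t s : A) (h : s * s = s) (k : ℕ)
    (hk : 1 ≤ k) : altProd t s k * s = altProd t s k := by
  rcases Nat.even_or_odd k with ⟨m, hm⟩ | ⟨m, hm⟩
  · subst hm
    obtain ⟨n, rfl⟩ : ∃ n, m = n + 1 := ⟨m - 1, by omega⟩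
    have he : Even (n + 1 + (n + 1)) := ⟨n + 1, rfl⟩
    have hd : (n + 1 + (n + 1)) / 2 = n + 1 := by omega
    rw [altProd, if_pos he, hd, pow_succ, mul_assoc, mul_assoc, h]
  · subst hm
    have ho : ¬ Even (2 * m + 1) := by simp [Nat.even_add_one]
    have hd : (2 * m + 1) / 2 = m := by omega
    rw [altProd, if_neg ho, hd]
    cases m with
    | zero => simp [h]
    | succ n => rw [mul_assoc, pow_succ, mul_assoc, mul_assoc, h]

lemma telescope {A : Type*} [Ring A] (f : ℕ → A) (n : ℕ) :
    ∑ i ∈ Finset.Icc 1 n, ((-1 : A) ^ i * (f i + f (i + 1)))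
      = -(f 1) - (-1 : A) ^ (n + 1) * f (n + 1) := by
  induction n with
  | zero => simp
  | succ m ih =>
      rw [Finset.sum_Icc_succ_top (by omega : 1 ≤ m + 1), ih, pow_succ, pow_succ]
      noncomm_ring

theorem stmt0aux {A : Type*} [Ring A] (s1 s2 : A)
    (h1 : s1 * s1 = s1) (h2 : s2 * s2 = s2) (n : ℕ) :
    altProd (1 - s1) (1 - s2) (n + 1) =
        1 + (∑ i ∈ Finset.Icc 1 n, (-1 : A) ^ i * (altProd s1 s2 i + altProd s2 s1 i))
          + (-1 : A) ^ (n + 1) * altProd s1 s2 (n + 1) ∧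
    altProd (1 - s2) (1 - s1) (n + 1) =
        1 + (∑ i ∈ Finset.Icc 1 n, (-1 : A) ^ i * (altProd s1 s2 i + altProd s2 s1 i))
          + (-1 : A) ^ (n + 1) * altProd s2 s1 (n + 1) := by
  induction n with
  | zero =>
      simp [altProd_one', altProd, mul_sub, sub_mul, sub_eq_add_neg]
  | succ m ih =>
      obtain ⟨ih1, ih2⟩ := ih
      set S : A := ∑ i ∈ Finset.Icc 1 m, (-1 : A) ^ i * (altProd s1 s2 i + altProd s2 s1 i)
        with hS
      have hSsum : ∑ i ∈ Finset.Icc 1 (m + 1),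
          (-1 : A) ^ i * (altProd s1 s2 i + altProd s2 s1 i)
          = S + (-1 : A) ^ (m + 1) * (altProd s1 s2 (m + 1) + altProd s2 s1 (m + 1)) := by
        rw [Finset.sum_Icc_succ_top (by omega : 1 ≤ m + 1)]
      -- S * s2
      have hSs2 : S * s2 = -s2 - (-1 : A) ^ (m + 1) * altProd s1 s2 (m + 1) := by
        rw [hS, Finset.sum_mul]
        have : ∀ i ∈ Finset.Icc 1 m,
            ((-1 : A) ^ i * (altProd s1 s2 i + altProd s2 s1 i)) * s2
            = (-1 : A) ^ i * (altProd s1 s2 i + altProd s1 s2 (i + 1)) := by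
          intro i hi
          simp only [Finset.mem_Icc] at hi
          rw [mul_assoc, add_mul, altProd_mul_self s1 s2 h2 i hi.1, ← altProd_succ]
        rw [Finset.sum_congr rfl this, telescope (fun i => altProd s1 s2 i) m,
          altProd_one']
      have hSs1 : S * s1 = -s1 - (-1 : A) ^ (m + 1) * altProd s2 s1 (m + 1) := by
        rw [hS, Finset.sum_mul]
        have : ∀ i ∈ Finset.Icc 1 m,
            ((-1 : A) ^ i * (altProd s1 s2 i + altProd s2 s1 i)) * s1
            = (-1 : A) ^ i * (altProd s2 s1 i + altProd s2 s1 (i + 1)) := by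
          intro i hi
          simp only [Finset.mem_Icc] at hi
          rw [mul_assoc, add_mul, altProd_mul_self s2 s1 h1 i hi.1, ← altProd_succ,
            add_comm (altProd s2 s1 (i + 1))]
        rw [Finset.sum_congr rfl this, telescope (fun i => altProd s2 s1 i) m,
          altProd_one']
      constructor
      · rw [altProd_succ, ih2, hSsum, altProd_succ s1 s2 (m + 1)]
        rw [mul_sub, mul_one, add_mul, add_mul, one_mul, hSs2, mul_assoc,
          pow_succ]
        noncomm_ring
      · rw [altProd_succ, ih1, hSsum, altProd_succ s2 s1 (m + 1)]
        rw [mul_sub, mul_one, add_mul, add_mul, one_mul, hSs1, mul_assoc,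
          pow_succ]
        noncomm_ring

/-- For idempotents `s1, s2` in an associative unital ring and every `j ≥ 1`,
`⟨1−s1, 1−s2⟩^j = 1 + Σ_{i=1}^{j−1} (−1)^i (⟨s1,s2⟩^i + ⟨s2,s1⟩^i) + (−1)^j ⟨s1,s2⟩^j`,
and symmetrically with the roles of `s1` and `s2` exchanged. -/
theorem stmt0 {A : Type*} [Ring A] (s1 s2 : A)
    (h1 : s1 * s1 = s1) (h2 : s2 * s2 = s2) (j : ℕ) (hj : 1 ≤ j) :
    altProd (1 - s1) (1 - s2) j =
        1 + (∑ i ∈ Finset.Icc 1 (j - 1), (-1 : A) ^ i * (altProd s1 s2 i + altProd s2 s1 i))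
          + (-1 : A) ^ j * altProd s1 s2 j ∧
    altProd (1 - s2) (1 - s1) j =
        1 + (∑ i ∈ Finset.Icc 1 (j - 1), (-1 : A) ^ i * (altProd s1 s2 i + altProd s2 s1 i))
          + (-1 : A) ^ j * altProd s2 s1 j := by
  obtain ⟨n, rfl⟩ : ∃ n, j = n + 1 := ⟨j - 1, by omega⟩
  simpa using stmt0aux s1 s2 h1 h2 n
end

section
/- Let A be an associative unital ring and let s1, s2 ∈ A be idempotents such that σ := ⟨s1,s2⟩^k = ⟨s2,s1⟩^k for some integer k ≥ 1. Let I be the set of odd integers between 1 and k−1, and set γ1 = (1−s2)·Σ_{i∈I} ⟨s2,s1⟩^i and γ2 = (1−s1)·Σ_{i∈I} ⟨s1,s2⟩^i. Then γ1·s1 = γ1, γ2·s2 = γ2, s1·γ1 = s1 − σ, and s2·γ2 = s2 − σ. -/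
lemma altProd_odd {A : Type*} [Monoid A] (t s : A) (m : ℕ) :
    altProd t s (2 * m + 1) = s * (t * s) ^ m := by
  have he : ¬ Even (2 * m + 1) := by simp [Nat.even_add_one, parity_simps]
  have hd : (2 * m + 1) / 2 = m := by omega
  simp [altProd, he, hd]

lemma stmt3_aux {A : Type*} [Ring A] (s1 s2 : A)
    (h1 : s1 * s1 = s1) (h2 : s2 * s2 = s2) (k : ℕ) (hk : 1 ≤ k)
    (hconf : altProd s1 s2 k = altProd s2 s1 k) :
    ((1 - s2) * ∑ i ∈ (Finset.Icc 1 (k - 1)).filter (fun i => Odd i), altProd s2 s1 i) * s1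
      = (1 - s2) * ∑ i ∈ (Finset.Icc 1 (k - 1)).filter (fun i => Odd i), altProd s2 s1 i
    ∧ s1 * ((1 - s2) * ∑ i ∈ (Finset.Icc 1 (k - 1)).filter (fun i => Odd i), altProd s2 s1 i)
      = s1 - altProd s1 s2 k := by
  have hset : (Finset.Icc 1 (k - 1)).filter (fun i => Odd i)
      = (Finset.range (k / 2)).image (fun m => 2 * m + 1) := by
    ext i
    simp only [Finset.mem_filter, Finset.mem_Icc, Finset.mem_image, Finset.mem_range,
      Nat.odd_iff]
    constructor
    · rintro ⟨⟨hi1, hi2⟩, hodd⟩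
      exact ⟨i / 2, by omega, by omega⟩
    · rintro ⟨m, hm, rfl⟩
      omega
  have hsum : ∑ i ∈ (Finset.Icc 1 (k - 1)).filter (fun i => Odd i), altProd s2 s1 i
      = ∑ m ∈ Finset.range (k / 2), s1 * (s2 * s1) ^ m := by
    rw [hset, Finset.sum_image (by intro a _ b _ h; simp only at h; omega)]
    exact Finset.sum_congr rfl fun m _ => altProd_odd s2 s1 m
  -- key identity: s1 * (s2*s1)^(k/2) = σ
  have hσ : s1 * (s2 * s1) ^ (k / 2) = altProd s1 s2 k := by
    rcases Nat.even_or_odd k with he | ho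
    · obtain ⟨n, hn⟩ := he
      have hn2 : k = 2 * n := by omega
      have hd : k / 2 = n := by omega
      obtain ⟨m, rfl⟩ : ∃ m, n = m + 1 := ⟨n - 1, by omega⟩
      have h1e : altProd s1 s2 k = (s1 * s2) ^ (m + 1) := by
        simp [altProd, hn2, hd, Nat.even_iff, Nat.mul_mod_right]
      have h2e : altProd s2 s1 k = (s2 * s1) ^ (m + 1) := by
        simp [altProd, hn2, hd, Nat.even_iff, Nat.mul_mod_right]
      rw [hd, ← h2e, ← hconf, h1e, pow_succ']
      simp only [← mul_assoc]
      rw [h1]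
    · obtain ⟨n, hn⟩ := ho
      have hno : ¬ Even k := by simp [hn, Nat.even_add_one, parity_simps]
      have hd : k / 2 = n := by omega
      rw [hconf]
      simp [altProd, hno, hd]
  have hpow : ∀ m, (s1 * (s2 * s1) ^ m) * s1 = s1 * (s2 * s1) ^ m := by
    intro m
    induction m with
    | zero => simp [h1]
    | succ n ih =>
      rw [pow_succ]
      simp only [mul_assoc]
      rw [h1]
  constructor
  · rw [hsum, mul_assoc, Finset.sum_mul]
    congr 1
    exact Finset.sum_congr rfl fun m _ => hpow m
  · rw [hsum, ← mul_assoc, Finset.mul_sum]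
    have hterm : ∀ m, (s1 * (1 - s2)) * (s1 * (s2 * s1) ^ m)
        = s1 * (s2 * s1) ^ m - s1 * (s2 * s1) ^ (m + 1) := by
      intro m
      rw [mul_sub, mul_one, sub_mul, pow_succ', ← mul_assoc s1 s1, h1]
      simp only [mul_assoc]
    rw [Finset.sum_congr rfl fun m _ => hterm m,
      Finset.sum_range_sub' (fun m => s1 * (s2 * s1) ^ m), hσ]
    simp

/-- Let `s1, s2` be idempotents of an associative unital ring with
`σ := ⟨s1,s2⟩^k = ⟨s2,s1⟩^k` for some `k ≥ 1`.  With `I` the set of odd integers between `1`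
and `k−1`, `γ1 = (1−s2)·Σ_{i∈I} ⟨s2,s1⟩^i` and `γ2 = (1−s1)·Σ_{i∈I} ⟨s1,s2⟩^i`, one has
`γ1·s1 = γ1`, `γ2·s2 = γ2`, `s1·γ1 = s1 − σ` and `s2·γ2 = s2 − σ`. -/
theorem stmt3 {A : Type*} [Ring A] (s1 s2 : A)
    (h1 : s1 * s1 = s1) (h2 : s2 * s2 = s2) (k : ℕ) (hk : 1 ≤ k)
    (hconf : altProd s1 s2 k = altProd s2 s1 k) :
    let σ : A := altProd s1 s2 k
    let I : Finset ℕ := (Finset.Icc 1 (k - 1)).filter (fun i => Odd i)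
    let γ1 : A := (1 - s2) * ∑ i ∈ I, altProd s2 s1 i
    let γ2 : A := (1 - s1) * ∑ i ∈ I, altProd s1 s2 i
    γ1 * s1 = γ1 ∧ γ2 * s2 = γ2 ∧ s1 * γ1 = s1 - σ ∧ s2 * γ2 = s2 - σ := by
  intro σ I γ1 γ2
  obtain ⟨ha1, ha2⟩ := stmt3_aux s1 s2 h1 h2 k hk hconf
  obtain ⟨hb1, hb2⟩ := stmt3_aux s2 s1 h2 h1 k hk hconf.symm
  have hc : σ = altProd s2 s1 k := hconf
  exact ⟨ha1, hb1, ha2, by rw [hb2, ← hc]⟩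
end

section
/- Suppose the presentation ⟨X|R⟩ is side-confluent. Then: (1) every element of K⟨X⟩ admits a unique normal form for ⟨X|R⟩; (2) the set of images in A = K⟨X⟩/I(R) of the words of ⟨X⟩ that are normal forms is a K-basis of A; (3) an element f of K⟨X⟩ belongs to I(R) if and only if its normal form equals 0. -/
open scoped TensorProduct
set_option linter.unusedSectionVars false

namespace CC

variable (K : Type*) [Field K] (X : Type*) [Fintype X] [LinearOrder X]

abbrev F : Type _ := MonoidAlgebra K (FreeMonoid X)

noncomputable def wd (w : FreeMonoid X) : F K X := MonoidAlgebra.of K (FreeMonoid X) w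

def wlen (w : FreeMonoid X) : ℕ := (FreeMonoid.toList w).length

noncomputable instance : LinearOrder (FreeMonoid X) :=
  LinearOrder.lift' (fun w => FreeMonoid.toList w) (fun _ _ h => FreeMonoid.toList.injective h)

noncomputable def lm (f : F K X) : FreeMonoid X := (f.coeff.support.max).unbotD 1

/-- The homogeneous component `V^{⊗m} = KX^{(m)}` of `K⟨X⟩`:
elements supported on words of length `m`. -/
noncomputable def degSub (m : ℕ) : Submodule K (F K X) where
  carrier := {f | ∀ w ∈ f.coeff.support, wlen X w = m}
  add_mem' := by
    intro a b ha hb w hw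
    rcases Finset.mem_union.mp (Finsupp.support_add hw) with h | h
    · exact ha w h
    · exact hb w h
  zero_mem' := by intro w hw; simp at hw
  smul_mem' := by intro c f hf w hw; exact hf w (Finsupp.support_smul hw)

lemma mem_degSub {m : ℕ} {f : F K X} :
    f ∈ degSub K X m ↔ ∀ w ∈ f.coeff.support, wlen X w = m := Iff.rfl

/-- `l_N(2k) = kN`, `l_N(2k+1) = kN + 1`. -/
def lN (N n : ℕ) : ℕ := if Even n then (n / 2) * N else (n / 2) * N + 1

/-- The homogeneous component `I(R)_m` of the two-sided ideal generated by `R`: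
`I(R)_m = Σ_{i=0}^{m−N} V^{⊗i}·R̄·V^{⊗m−N−i}` for `m ≥ N` and `I(R)_m = 0` for `m < N`. -/
noncomputable def idealPiece (N : ℕ) (R : Set (F K X)) (m : ℕ) : Submodule K (F K X) :=
  if m < N then ⊥
  else ⨆ i ∈ Finset.range (m - N + 1),
    degSub K X i * Submodule.span K R * degSub K X (m - N - i)

/-- The two-sided ideal `I(R)` of `K⟨X⟩` generated by `R`, as a `K`-subspace. -/
noncomputable def idealSpan (R : Set (F K X)) : Submodule K (F K X) :=
  Submodule.span K {x | ∃ u v : FreeMonoid X, ∃ g ∈ R, x = wd K X u * g * wd K X v}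

/-- `J_0 = K`, `J_1 = V`, and `J_n = ⋂_{i=0}^{l_N(n)−N} V^{⊗i}·R̄·V^{⊗l_N(n)−N−i}` for `n ≥ 2`. -/
noncomputable def Jspace (N : ℕ) (R : Set (F K X)) : ℕ → Submodule K (F K X)
  | 0 => degSub K X 0
  | 1 => degSub K X 1
  | (n + 2) => ⨅ i ∈ Finset.range (lN N (n + 2) - N + 1),
      degSub K X i * Submodule.span K R * degSub K X (lN N (n + 2) - N - i)

open Classical in
/-- The reduction `r_{u·g·v}` of the presentation `⟨X|R⟩`: the linear endomorphism of `K⟨X⟩`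
fixing every word other than `u·lm(g)·v` and sending `u·lm(g)·v` to `u·(lm(g)−g)·v`. -/
noncomputable def redMap (u : FreeMonoid X) (g : F K X) (v : FreeMonoid X) :
    F K X →ₗ[K] F K X :=
  Finsupp.linearCombination K (fun w : FreeMonoid X =>
    if w = u * lm K X g * v then wd K X u * (wd K X (lm K X g) - g) * wd K X v
    else wd K X w) ∘ₗ (MonoidAlgebra.coeffLinearEquiv K).toLinearMap

/-- `f` is a normal form for `⟨X|R⟩` if it is fixed by every reduction. -/
def IsNormalForm (R : Set (F K X)) (f : F K X) : Prop :=
  ∀ u v : FreeMonoid X, ∀ g ∈ R, redMap K X u g v f = f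

/-- `g` is a normal form of `f`: `g` is a normal form and is obtained from `f` by applying a
finite sequence of reductions of `⟨X|R⟩`. -/
def NormalFormOf (R : Set (F K X)) (f g : F K X) : Prop :=
  IsNormalForm K X R g ∧
    ∃ L : List (FreeMonoid X × F K X × FreeMonoid X),
      (∀ p ∈ L, p.2.1 ∈ R) ∧
      g = L.foldr (fun p h => redMap K X p.1 p.2.1 p.2.2 h) f

/-- The presentation `⟨X|R⟩` is reduced: for every `f ∈ R`, `lm(f) − f` is a normal form for
`⟨X|R⟩` and `lm(f)` is a normal form for `⟨X | R∖{f}⟩`. -/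
def Reduced (R : Set (F K X)) : Prop :=
  ∀ f ∈ R, IsNormalForm K X R (wd K X (lm K X f) - f) ∧
    IsNormalForm K X (R \ {f}) (wd K X (lm K X f))

/-- `R` consists of `N`-homogeneous elements with leading coefficient `1`. -/
def NHomogLC1 (N : ℕ) (R : Set (F K X)) : Prop :=
  ∀ f ∈ R, f ∈ degSub K X N ∧ f.coeff (lm K X f) = 1

open Classical in
/-- The operator `S` of the presentation `⟨X|R⟩`: the endomorphism of `V^{⊗N}` sending `lm(f)`
to `lm(f) − f` for every `f ∈ R` and fixing all other words (extended by the identity on words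
of other lengths). -/
noncomputable def Sop (R : Set (F K X)) : F K X →ₗ[K] F K X :=
  Finsupp.linearCombination K (fun w : FreeMonoid X =>
    if h : ∃ f ∈ R, lm K X f = w then wd K X w - h.choose else wd K X w) ∘ₗ
    (MonoidAlgebra.coeffLinearEquiv K).toLinearMap

/-- `S ⊗ id_{V^{⊗b}}` realized on `K⟨X⟩`: on a word of length `a + b`, apply `S` to the first
`a` letters and the identity to the last `b` letters; the identity on all other words. -/
noncomputable def applyLeft (S : F K X →ₗ[K] F K X) (a b : ℕ) : F K X →ₗ[K] F K X :=
  Finsupp.linearCombination K (fun w : FreeMonoid X =>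
    if wlen X w = a + b then
      S (wd K X (FreeMonoid.ofList ((FreeMonoid.toList w).take a))) *
        wd K X (FreeMonoid.ofList ((FreeMonoid.toList w).drop a))
    else wd K X w) ∘ₗ (MonoidAlgebra.coeffLinearEquiv K).toLinearMap

/-- `id_{V^{⊗a}} ⊗ S` realized on `K⟨X⟩`: on a word of length `a + b`, apply the identity to
the first `a` letters and `S` to the last `b` letters; the identity on all other words. -/
noncomputable def applyRight (S : F K X →ₗ[K] F K X) (a b : ℕ) : F K X →ₗ[K] F K X :=
  Finsupp.linearCombination K (fun w : FreeMonoid X =>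
    if wlen X w = a + b then
      wd K X (FreeMonoid.ofList ((FreeMonoid.toList w).take a)) *
        S (wd K X (FreeMonoid.ofList ((FreeMonoid.toList w).drop a)))
    else wd K X w) ∘ₗ (MonoidAlgebra.coeffLinearEquiv K).toLinearMap

/-- The presentation `⟨X|R⟩` is side-confluent: for every `1 ≤ m ≤ N−1` there exists `k ≥ 1`
with `⟨id_{V^{⊗m}}⊗S, S⊗id_{V^{⊗m}}⟩^k = ⟨S⊗id_{V^{⊗m}}, id_{V^{⊗m}}⊗S⟩^k` on `V^{⊗N+m}`. -/
def SideConfluent (N : ℕ) (R : Set (F K X)) : Prop :=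
  ∀ m : ℕ, 1 ≤ m → m ≤ N - 1 →
    ∃ k : ℕ, 1 ≤ k ∧
      ∀ f ∈ degSub K X (N + m),
        altProd (applyRight K X (Sop K X R) m N) (applyLeft K X (Sop K X R) N m) k f =
          altProd (applyLeft K X (Sop K X R) N m) (applyRight K X (Sop K X R) m N) k f

/-- The extra-condition: `(V^{⊗n}⊗R̄) ∩ (R̄⊗V^{⊗n}) ⊆ V^{⊗n−1}⊗R̄⊗V` for every `2 ≤ n ≤ N−1`. -/
def ExtraCondition (N : ℕ) (R : Set (F K X)) : Prop :=
  ∀ n : ℕ, 2 ≤ n → n ≤ N - 1 →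
    (degSub K X n * Submodule.span K R) ⊓ (Submodule.span K R * degSub K X n) ≤
      degSub K X (n - 1) * Submodule.span K R * degSub K X 1

/-- A reduction operator relative to `X^{(m)}`, realized as a linear endomorphism of `K⟨X⟩`
extended by the identity outside of `V^{⊗m}`: an idempotent operator fixing each word of
length `m` or mapping it to an element of `V^{⊗m}` all of whose monomials are strictly
smaller. -/
structure IsRedOp (m : ℕ) (T : F K X →ₗ[K] F K X) : Prop where
  idem : T ∘ₗ T = T
  le : ∀ w : FreeMonoid X, wlen X w = m →
    T (wd K X w) = wd K X w ∨
      (T (wd K X w) ∈ degSub K X m ∧ ∀ u ∈ (T (wd K X w)).coeff.support, u < w)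
  other : ∀ w : FreeMonoid X, wlen X w ≠ m → T (wd K X w) = wd K X w

/-- The kernel `I(R)_{m−l_N(n)} ⊗ V^{⊗l_N(n)}` of the reduction operator `F_1^{n,m}`. -/
noncomputable def ker1 (N : ℕ) (R : Set (F K X)) (n m : ℕ) : Submodule K (F K X) :=
  idealPiece K X N R (m - lN N n) * degSub K X (lN N n)

/-- The kernel of the reduction operator `F_2^{n,m}`: `⊥` if `m < l_N(n+1)` (so that
`F_2^{n,m} = id`), and `V^{⊗m−l_N(n+1)} ⊗ J_{n+1}` otherwise. -/
noncomputable def ker2 (N : ℕ) (R : Set (F K X)) (n m : ℕ) : Submodule K (F K X) :=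
  if m < lN N (n + 1) then ⊥
  else degSub K X (m - lN N (n + 1)) * Jspace K X N R (n + 1)

/-- The span of the normal words of length `d`, i.e. `φ(V^{⊗d})` where `φ` is the
normal-form map. -/
noncomputable def nfSub (R : Set (F K X)) (d : ℕ) : Submodule K (F K X) :=
  Submodule.span K
    {x | ∃ w : FreeMonoid X, wlen X w = d ∧ IsNormalForm K X R (wd K X w) ∧ x = wd K X w}

/-- `Γ = (id − T2)·Σ_{i odd, 1 ≤ i ≤ k−1} ⟨T2,T1⟩^i`, the image of the element `γ1` of the
confluence algebra under the `(T1,T2)`-representation. -/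
noncomputable def Gamma (T1 T2 : F K X →ₗ[K] F K X) (k : ℕ) : F K X →ₗ[K] F K X :=
  (1 - T2) * ∑ i ∈ (Finset.Icc 1 (k - 1)).filter (fun i => Odd i), altProd T2 T1 i

end CC


namespace CC

open Finsupp MonoidAlgebra

variable {K : Type*} [Field K] {X : Type*} [Fintype X] [LinearOrder X]

instance instCoeFunF : CoeFun (F K X) (fun _ => FreeMonoid X → K) := ⟨fun f => f.coeff⟩

lemma lc_comp_single (φ : FreeMonoid X → F K X) (a : FreeMonoid X) (c : K) :
    (Finsupp.linearCombination K φ ∘ₗ (MonoidAlgebra.coeffLinearEquiv K).toLinearMap)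
      (MonoidAlgebra.single a c) = c • φ a := by
  show Finsupp.linearCombination K φ (Finsupp.single a c) = c • φ a
  simp

lemma lc_comp_apply (φ : FreeMonoid X → F K X) (f : F K X) :
    (Finsupp.linearCombination K φ ∘ₗ (MonoidAlgebra.coeffLinearEquiv K).toLinearMap) f
      = f.coeff.sum fun i a => a • φ i :=
  Finsupp.linearCombination_apply _ _

lemma lt_iff_lex {u v : FreeMonoid X} :
    u < v ↔ List.Lex (· < ·) (FreeMonoid.toList u) (FreeMonoid.toList v) := Iff.rfl

lemma wlen_mul (u v : FreeMonoid X) : wlen X (u * v) = wlen X u + wlen X v := by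
  simp [wlen, FreeMonoid.toList_mul]

lemma wlen_ofList (l : List X) : wlen X (FreeMonoid.ofList l) = l.length := by
  simp [wlen]

lemma lex_append {l1 l2 : List X} (hl : l1.length = l2.length)
    (h : List.Lex (· < ·) l1 l2) (t1 t2 : List X) :
    List.Lex (· < ·) (l1 ++ t1) (l2 ++ t2) := by
  induction l1 generalizing l2 with
  | nil =>
    cases l2 with
    | nil => exact absurd h (by intro h; cases h)
    | cons b bs => simp at hl
  | cons a as ih =>
    cases l2 with
    | nil => simp at hl
    | cons b bs =>
      cases h with
      | rel hab => exact List.Lex.rel hab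
      | cons h' => exact List.Lex.cons (ih (by simpa using hl) h')

lemma mul_lt_mul_mid {a b : FreeMonoid X} (u v v' : FreeMonoid X)
    (h : a < b) (hl : wlen X a = wlen X b) : u * a * v < u * b * v' := by
  rw [lt_iff_lex] at h ⊢
  rw [mul_assoc, mul_assoc]
  simp only [FreeMonoid.toList_mul]
  exact List.Lex.append_left _ (lex_append hl h _ _) _

lemma list_split {α : Type*} : ∀ (p q s t : List α), p ++ s = q ++ t →
    p.length ≤ q.length → ∃ z, q = p ++ z ∧ s = z ++ t := by
  intro p
  induction p with
  | nil => intro q s t h _; exact ⟨q, rfl, h⟩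
  | cons a p ih =>
    intro q s t h hl
    cases q with
    | nil => simp at hl
    | cons b q =>
      simp only [List.cons_append, List.cons.injEq] at h
      obtain ⟨z, hz1, hz2⟩ := ih q s t h.2 (by simpa using hl)
      exact ⟨z, by simp [h.1, hz1], hz2⟩

lemma lm_mem_support {g : F K X} (hg : g ≠ 0) : lm K X g ∈ g.coeff.support := by
  have hne : g.coeff.support.Nonempty := Finsupp.support_nonempty_iff.mpr (by simpa using hg)
  obtain ⟨m, hm⟩ := Finset.max_of_nonempty hne
  have : lm K X g = m := by simp [lm, hm]
  rw [this]
  exact Finset.mem_of_max hm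

lemma le_lm_of_mem_support {g : F K X} {w : FreeMonoid X} (hw : w ∈ g.coeff.support) :
    w ≤ lm K X g := by
  have hne : g.coeff.support.Nonempty := ⟨w, hw⟩
  obtain ⟨m, hm⟩ := Finset.max_of_nonempty hne
  have h1 : lm K X g = m := by simp [lm, hm]
  rw [h1]
  have := Finset.le_max hw
  rw [hm] at this
  exact_mod_cast this

lemma lt_lm_of_mem_support {g : F K X} {w : FreeMonoid X} (hw : w ∈ g.coeff.support)
    (hne : w ≠ lm K X g) : w < lm K X g :=
  lt_of_le_of_ne (le_lm_of_mem_support hw) hne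

lemma wd_mul (u v : FreeMonoid X) : wd K X u * wd K X v = wd K X (u * v) := by
  simp [wd]

lemma wd_apply (w t : FreeMonoid X) : (wd K X w) t = if t = w then (1:K) else 0 := by
  rw [wd, MonoidAlgebra.of_apply, MonoidAlgebra.coeff_single, Finsupp.single_apply]
  simp [eq_comm]

lemma conj_eq_mapDomain (u v : FreeMonoid X) (f : F K X) :
    wd K X u * f * wd K X v = MonoidAlgebra.mapDomain (fun w => u * w * v) f := by
  induction f using MonoidAlgebra.induction_linear with
  | zero => simp [MonoidAlgebra.mapDomain_zero]
  | add a b ha hb =>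
    rw [MonoidAlgebra.mapDomain_add, ← ha, ← hb, mul_add, add_mul]
  | single w c =>
    rw [MonoidAlgebra.mapDomain_single]
    show wd K X u * MonoidAlgebra.single w c * wd K X v = _
    simp [wd, MonoidAlgebra.of_apply, MonoidAlgebra.single_mul_single]

lemma conj_inj (u v : FreeMonoid X) : Function.Injective (fun w : FreeMonoid X => u * w * v) := by
  intro a b h
  have h' : u * a = u * b := mul_right_cancel (by simpa only [mul_assoc] using h :
    (u * a) * v = (u * b) * v)
  exact mul_left_cancel h'

end CC

namespace CC

open Finsupp MonoidAlgebra

variable {K : Type*} [Field K] {X : Type*} [Fintype X] [LinearOrder X]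

lemma conj_apply (u v : FreeMonoid X) (f : F K X) (w : FreeMonoid X) :
    (wd K X u * f * wd K X v) (u * w * v) = f w := by
  rw [conj_eq_mapDomain]
  exact Finsupp.mapDomain_apply (conj_inj u v) f.coeff w

lemma conj_support (u v : FreeMonoid X) (f : F K X) :
    (wd K X u * f * wd K X v).coeff.support = f.coeff.support.image (fun w => u * w * v) := by
  classical
  rw [conj_eq_mapDomain]
  exact Finsupp.mapDomain_support_of_injective (conj_inj u v) f.coeff

/-- `wd` as right multiplication only. -/
lemma mul_wd_eq_mapDomain (v : FreeMonoid X) (f : F K X) :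
    f * wd K X v = MonoidAlgebra.mapDomain (fun w => w * v) f := by
  have := conj_eq_mapDomain (K := K) 1 v f
  simpa [wd, ← MonoidAlgebra.one_def] using this

lemma wd_mul_eq_mapDomain (u : FreeMonoid X) (f : F K X) :
    wd K X u * f = MonoidAlgebra.mapDomain (fun w => u * w) f := by
  have := conj_eq_mapDomain (K := K) u 1 f
  simpa [wd, ← MonoidAlgebra.one_def] using this

section Hom

variable {N : ℕ} {R : Set (F K X)}

lemma g_ne_zero (hhom : NHomogLC1 K X N R) {g : F K X} (hg : g ∈ R) : g ≠ 0 := by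
  intro h
  have := (hhom g hg).2
  rw [h] at this
  simp at this

lemma wlen_lm (hhom : NHomogLC1 K X N R) {g : F K X} (hg : g ∈ R) :
    wlen X (lm K X g) = N := by
  have h1 : lm K X g ∈ g.coeff.support := Finsupp.mem_support_iff.mpr (by
    rw [(hhom g hg).2]; exact one_ne_zero)
  exact (hhom g hg).1 (lm K X g) h1

lemma supp_lead_sub (hhom : NHomogLC1 K X N R) {g : F K X} (hg : g ∈ R) :
    ∀ d ∈ (wd K X (lm K X g) - g).coeff.support, wlen X d = N ∧ d < lm K X g := by
  intro d hd
  have hdv : (wd K X (lm K X g) - g) d ≠ 0 := Finsupp.mem_support_iff.mp hd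
  have hne : d ≠ lm K X g := by
    intro h
    apply hdv
    rw [h]
    show (wd K X (lm K X g)) (lm K X g) - g (lm K X g) = 0
    rw [wd_apply, (hhom g hg).2]
    simp
  have hdg : d ∈ g.coeff.support := by
    rw [Finsupp.mem_support_iff]
    intro h0
    apply hdv
    show (wd K X (lm K X g)) d - g d = 0
    rw [wd_apply, h0, if_neg hne, sub_zero]
  exact ⟨(hhom g hg).1 d hdg, lt_lm_of_mem_support hdg hne⟩

/-- The key formula for a reduction. -/
lemma redMap_apply (u v : FreeMonoid X) (g : F K X) (f : F K X) :
    redMap K X u g v f = f - f (u * lm K X g * v) • (wd K X u * g * wd K X v) := by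
  classical
  induction f using MonoidAlgebra.induction_linear with
  | zero => simp
  | add a b ha hb =>
    rw [map_add, ha, hb]
    show _ = _ - (a (u * lm K X g * v) + b (u * lm K X g * v)) • _
    rw [add_smul, sub_add_sub_comm]
  | single w c =>
    rw [redMap]
    erw [lc_comp_single]
    show c • _ = MonoidAlgebra.single w c - _
    rw [MonoidAlgebra.coeff_single, Finsupp.single_apply]
    by_cases h : w = u * lm K X g * v
    · rw [if_pos h, if_pos h]
      subst h
      have h2 : (MonoidAlgebra.single (u * lm K X g * v) c : F K X)
          = c • (wd K X u * wd K X (lm K X g) * wd K X v) := by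
        rw [wd_mul, wd_mul, wd, MonoidAlgebra.of_apply]
        show _ = c • MonoidAlgebra.single _ (1:K)
        rw [MonoidAlgebra.smul_single, smul_eq_mul, mul_one]
      rw [h2, ← smul_sub]
      congr 1
      rw [mul_sub, sub_mul]
    · rw [if_neg h, if_neg h, zero_smul, sub_zero]
      rw [wd, MonoidAlgebra.of_apply]
      show c • MonoidAlgebra.single w (1:K) = _
      rw [MonoidAlgebra.smul_single, smul_eq_mul, mul_one]

lemma conj_g_ne_zero (hhom : NHomogLC1 K X N R) {g : F K X} (hg : g ∈ R)
    (u v : FreeMonoid X) : wd K X u * g * wd K X v ≠ 0 := by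
  intro h
  have := conj_apply (K := K) u v g (lm K X g)
  rw [h] at this
  simp only [MonoidAlgebra.coeff_zero, Finsupp.coe_zero, Pi.zero_apply] at this
  rw [(hhom g hg).2] at this
  exact one_ne_zero this.symm

/-- Characterization of normal forms by vanishing of coefficients. -/
lemma isNormalForm_iff (hhom : NHomogLC1 K X N R) {f : F K X} :
    IsNormalForm K X R f ↔ ∀ u v : FreeMonoid X, ∀ g ∈ R, f (u * lm K X g * v) = 0 := by
  constructor
  · intro h u v g hg
    have := h u v g hg
    rw [redMap_apply] at this
    have h2 : f (u * lm K X g * v) • (wd K X u * g * wd K X v) = 0 := by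
      have := sub_eq_self.mp this
      exact this
    rcases smul_eq_zero.mp h2 with h3 | h3
    · exact h3
    · exact absurd h3 (conj_g_ne_zero hhom hg u v)
  · intro h u v g hg
    rw [redMap_apply, h u v g hg, zero_smul, sub_zero]

end Hom

end CC

namespace CC

open Finsupp MonoidAlgebra

variable {K : Type*} [Field K] {X : Type*} [Fintype X] [LinearOrder X]
variable {N : ℕ} {R : Set (F K X)}

/-- `lm` is injective on `R`. -/
lemma lm_injOn (hhom : NHomogLC1 K X N R) (hred : Reduced K X R)
    {g1 g2 : F K X} (h1 : g1 ∈ R) (h2 : g2 ∈ R) (h : lm K X g1 = lm K X g2) : g1 = g2 := by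
  by_contra hne
  have h3 : g2 ∈ R \ {g1} := ⟨h2, fun hc => hne (Set.mem_singleton_iff.mp hc).symm⟩
  have h4 := (hred g1 h1).2 1 1 g2 h3
  rw [redMap_apply] at h4
  have h5 : (1 : FreeMonoid X) * lm K X g2 * 1 = lm K X g1 := by rw [one_mul, mul_one, h]
  rw [h5] at h4
  have h6 : (wd K X (lm K X g1)) (lm K X g1) = 1 := by rw [wd_apply, if_pos rfl]
  rw [h6] at h4
  have h7 := sub_eq_self.mp h4
  rw [one_smul] at h7
  exact conj_g_ne_zero hhom h3.1 1 1 h7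

lemma Sop_wd_lm (hhom : NHomogLC1 K X N R) (hred : Reduced K X R)
    {g : F K X} (hg : g ∈ R) :
    Sop K X R (wd K X (lm K X g)) = wd K X (lm K X g) - g := by
  classical
  rw [wd, MonoidAlgebra.of_apply, Sop]
  erw [lc_comp_single]
  rw [one_smul]
  have h : ∃ f ∈ R, lm K X f = lm K X g := ⟨g, hg, rfl⟩
  rw [dif_pos h]
  have h2 := h.choose_spec
  have h3 : h.choose = g := lm_injOn hhom hred h2.1 hg h2.2
  rw [h3]
  rfl

lemma Sop_wd_of_not {w : FreeMonoid X} (h : ¬ ∃ f ∈ R, lm K X f = w) :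
    Sop K X R (wd K X w) = wd K X w := by
  classical
  rw [wd, MonoidAlgebra.of_apply, Sop]
  erw [lc_comp_single]
  rw [one_smul, dif_neg h]
  rfl

/-- A word is reducible. -/
def RedW (R : Set (F K X)) (w : FreeMonoid X) : Prop :=
  ∃ p : FreeMonoid X × FreeMonoid X × F K X, p.2.2 ∈ R ∧ w = p.1 * lm K X p.2.2 * p.2.1

/-- The set of words of length `m`. -/
noncomputable def WS (X : Type*) [Fintype X] [LinearOrder X] : ℕ → Finset (FreeMonoid X)
  | 0 => {1}
  | m + 1 => Finset.univ.biUnion fun a : X => (WS X m).image (fun w => FreeMonoid.of a * w)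

lemma mem_WS {m : ℕ} {w : FreeMonoid X} : w ∈ WS X m ↔ wlen X w = m := by
  induction m generalizing w with
  | zero =>
    simp only [WS, Finset.mem_singleton]
    constructor
    · rintro rfl; rfl
    · intro h
      apply FreeMonoid.toList.injective
      have : FreeMonoid.toList w = [] := List.length_eq_zero_iff.mp h
      simp [this]
  | succ m ih =>
    simp only [WS, Finset.mem_biUnion, Finset.mem_image, Finset.mem_univ, true_and]
    constructor
    · rintro ⟨a, w', hw', rfl⟩
      rw [wlen_mul, ih.mp hw']
      show 1 + m = m + 1
      omega
    · intro h
      rcases hl : FreeMonoid.toList w with _ | ⟨a, l⟩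
      · rw [wlen, hl] at h; simp at h
      · rw [wlen, hl] at h
        simp only [List.length_cons, Nat.add_right_cancel_iff] at h
        refine ⟨a, FreeMonoid.ofList l, ih.mpr (by rw [wlen_ofList]; exact h), ?_⟩
        apply FreeMonoid.toList.injective
        rw [hl, FreeMonoid.toList_mul, FreeMonoid.toList_ofList]
        rfl

/-- The number of words of the same length smaller than `w`. -/
noncomputable def mu (w : FreeMonoid X) : ℕ :=
  ((WS X (wlen X w)).filter (· < w)).card

lemma mu_lt_mu {w' w : FreeMonoid X} (hl : wlen X w' = wlen X w) (h : w' < w) :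
    mu w' < mu w := by
  apply Finset.card_lt_card
  rw [hl]
  constructor
  · intro u hu
    rw [Finset.mem_filter] at hu ⊢
    exact ⟨hu.1, lt_trans hu.2 h⟩
  · intro hsub
    have : w' ∈ (WS X (wlen X w)).filter (· < w) :=
      Finset.mem_filter.mpr ⟨mem_WS.mpr hl, h⟩
    have h2 := hsub this
    rw [Finset.mem_filter] at h2
    exact absurd h2.2 (lt_irrefl w')

/-- One-step reduct of a word (using a chosen reduction). -/
noncomputable def reduct (R : Set (F K X)) (w : FreeMonoid X) : F K X := by
  classical
  exact if h : RedW R w then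
    wd K X h.choose.1 * (wd K X (lm K X h.choose.2.2) - h.choose.2.2) * wd K X h.choose.2.1
  else wd K X w

lemma reduct_spec {w : FreeMonoid X} (h : RedW R w) :
    ∃ u v : FreeMonoid X, ∃ g ∈ R, w = u * lm K X g * v ∧
      reduct R w = wd K X u * (wd K X (lm K X g) - g) * wd K X v := by
  classical
  refine ⟨h.choose.1, h.choose.2.1, h.choose.2.2, h.choose_spec.1, h.choose_spec.2, ?_⟩
  rw [reduct, dif_pos h]

lemma reduct_of_not {w : FreeMonoid X} (h : ¬ RedW R w) : reduct R w = wd K X w := by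
  classical
  rw [reduct, dif_neg h]

lemma supp_reduct (hhom : NHomogLC1 K X N R) {w : FreeMonoid X} (h : RedW R w) :
    ∀ w' ∈ (reduct R w).coeff.support, wlen X w' = wlen X w ∧ w' < w := by
  obtain ⟨u, v, g, hg, hw, hred⟩ := reduct_spec h
  intro w' hw'
  rw [hred, conj_support, Finset.mem_image] at hw'
  obtain ⟨d, hd, rfl⟩ := hw'
  obtain ⟨hdl, hdlt⟩ := supp_lead_sub hhom hg d hd
  constructor
  · rw [hw, wlen_mul, wlen_mul, wlen_mul, wlen_mul, hdl, wlen_lm hhom hg]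
  · rw [hw]
    exact mul_lt_mul_mid u v v hdlt (by rw [hdl, wlen_lm hhom hg])

end CC

namespace CC

open Finsupp MonoidAlgebra

variable {K : Type*} [Field K] {X : Type*} [Fintype X] [LinearOrder X]
variable {N : ℕ} {R : Set (F K X)}

/-- Fueled normal-form computation on words. -/
noncomputable def nfAux (R : Set (F K X)) : ℕ → FreeMonoid X → F K X
  | 0, w => wd K X w
  | n + 1, w => by
    classical
    exact if RedW R w then (reduct R w).coeff.sum (fun w' c => c • nfAux R n w') else wd K X w

lemma nfAux_succ_pos {n : ℕ} {w : FreeMonoid X} (h : RedW R w) :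
    nfAux R (n + 1) w = (reduct R w).coeff.sum (fun w' c => c • nfAux R n w') := by
  classical
  rw [nfAux, if_pos h]

lemma nfAux_succ_neg {n : ℕ} {w : FreeMonoid X} (h : ¬ RedW R w) :
    nfAux R (n + 1) w = wd K X w := by
  classical
  rw [nfAux, if_neg h]

lemma nfAux_stable (hhom : NHomogLC1 K X N R) :
    ∀ (k : ℕ) (w : FreeMonoid X), mu w = k → ∀ n m : ℕ, k < n → k < m →
      nfAux R n w = nfAux R m w := by
  intro k
  induction k using Nat.strong_induction_on with
  | _ k IH =>
    intro w hk n m hn hm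
    obtain ⟨n', rfl⟩ : ∃ n', n = n' + 1 := ⟨n - 1, by omega⟩
    obtain ⟨m', rfl⟩ : ∃ m', m = m' + 1 := ⟨m - 1, by omega⟩
    by_cases h : RedW R w
    · rw [nfAux_succ_pos h, nfAux_succ_pos h]
      apply Finsupp.sum_congr
      intro w' hw'
      obtain ⟨hl, hlt⟩ := supp_reduct hhom h w' hw'
      have hmu : mu w' < k := hk ▸ mu_lt_mu hl hlt
      rw [IH (mu w') hmu w' rfl n' m' (by omega) (by omega)]
    · rw [nfAux_succ_neg h, nfAux_succ_neg h]

/-- The normal form of a word. -/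
noncomputable def nfw (R : Set (F K X)) (w : FreeMonoid X) : F K X :=
  nfAux R (mu w + 1) w

lemma nfw_of_not (h : ¬ RedW R w) : nfw R w = wd K X w := nfAux_succ_neg h

lemma nfw_of_red (hhom : NHomogLC1 K X N R) {w : FreeMonoid X} (h : RedW R w) :
    nfw R w = (reduct R w).coeff.sum (fun w' c => c • nfw R w') := by
  rw [nfw, nfAux_succ_pos h]
  apply Finsupp.sum_congr
  intro w' hw'
  obtain ⟨hl, hlt⟩ := supp_reduct hhom h w' hw'
  have hmu : mu w' < mu w := mu_lt_mu hl hlt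
  rw [nfAux_stable hhom (mu w') w' rfl (mu w) (mu w' + 1) hmu (by omega)]
  rfl

/-- The normal-form linear map. -/
noncomputable def Phi (R : Set (F K X)) : F K X →ₗ[K] F K X :=
  Finsupp.linearCombination K (fun w => nfw R w) ∘ₗ (MonoidAlgebra.coeffLinearEquiv K).toLinearMap

lemma Phi_wd (w : FreeMonoid X) : Phi R (wd K X w) = nfw R w := by
  rw [wd, MonoidAlgebra.of_apply, Phi]
  erw [lc_comp_single]
  rw [one_smul]

lemma Phi_apply (f : F K X) : Phi R f = f.coeff.sum fun w c => c • nfw R w := by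
  rw [Phi]
  erw [lc_comp_apply]

lemma Phi_of_supp_not_red {f : F K X} (h : ∀ w ∈ f.coeff.support, ¬ RedW R w) :
    Phi R f = f := by
  rw [Phi_apply]
  conv_rhs => rw [← MonoidAlgebra.sum_coeff_single f]
  apply Finsupp.sum_congr
  intro w hw
  rw [nfw_of_not (h w hw), wd, MonoidAlgebra.of_apply]
  rw [MonoidAlgebra.smul_single, smul_eq_mul, mul_one]

/-- coefficients of `nfw` vanish on reducible words. -/
lemma nfw_coeff (hhom : NHomogLC1 K X N R) :
    ∀ (k : ℕ) (w : FreeMonoid X), mu w = k → ∀ t : FreeMonoid X, RedW R t →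
      (nfw R w) t = 0 := by
  intro k
  induction k using Nat.strong_induction_on with
  | _ k IH =>
    intro w hk t ht
    by_cases h : RedW R w
    · rw [nfw_of_red hhom h]
      rw [MonoidAlgebra.coeff_finsuppSum, Finsupp.sum_apply]
      apply Finset.sum_eq_zero
      intro w' hw'
      obtain ⟨hl, hlt⟩ := supp_reduct hhom h w' hw'
      have hmu : mu w' < k := hk ▸ mu_lt_mu hl hlt
      show (reduct R w) w' • (nfw R w') t = 0
      rw [IH (mu w') hmu w' rfl t ht, smul_zero]
    · rw [nfw_of_not h, wd_apply]
      rw [if_neg]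
      intro he
      exact h (he ▸ ht)

lemma Phi_coeff (hhom : NHomogLC1 K X N R) (f : F K X) {t : FreeMonoid X} (ht : RedW R t) :
    (Phi R f) t = 0 := by
  rw [Phi_apply, MonoidAlgebra.coeff_finsuppSum, Finsupp.sum_apply]
  apply Finset.sum_eq_zero
  intro w _
  show f w • (nfw R w) t = 0
  rw [nfw_coeff hhom (mu w) w rfl t ht, smul_zero]

lemma isNormalForm_iff_coeff (hhom : NHomogLC1 K X N R) {f : F K X} :
    IsNormalForm K X R f ↔ ∀ t : FreeMonoid X, RedW R t → f t = 0 := by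
  rw [isNormalForm_iff hhom]
  constructor
  · rintro h t ⟨⟨u, v, g⟩, hg, rfl⟩
    exact h u v g hg
  · intro h u v g hg
    exact h _ ⟨⟨u, v, g⟩, hg, rfl⟩

lemma Phi_isNormalForm (hhom : NHomogLC1 K X N R) (f : F K X) :
    IsNormalForm K X R (Phi R f) :=
  (isNormalForm_iff_coeff hhom).mpr (fun _ ht => Phi_coeff hhom f ht)

end CC

namespace CC

open Finsupp MonoidAlgebra

variable {K : Type*} [Field K] {X : Type*} [Fintype X] [LinearOrder X]
variable {N : ℕ} {R : Set (F K X)}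

lemma single_eq_smul_wd (a : FreeMonoid X) (c : K) :
    (MonoidAlgebra.single a c : F K X) = c • wd K X a := by
  rw [wd, MonoidAlgebra.of_apply, MonoidAlgebra.smul_single, smul_eq_mul, mul_one]

lemma conj_sum (u v : FreeMonoid X) (D : F K X) :
    wd K X u * D * wd K X v = D.coeff.sum fun d c => c • wd K X (u * d * v) := by
  rw [conj_eq_mapDomain, MonoidAlgebra.mapDomain, Finsupp.mapDomain, MonoidAlgebra.ofCoeff_finsuppSum]
  apply Finsupp.sum_congr
  intro d _
  rw [MonoidAlgebra.ofCoeff_single, single_eq_smul_wd]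

lemma map_conj_sum (L : F K X →ₗ[K] F K X) (u v : FreeMonoid X) (D : F K X) :
    L (wd K X u * D * wd K X v) = D.coeff.sum fun d c => c • L (wd K X (u * d * v)) := by
  rw [conj_sum, map_finsuppSum]
  apply Finsupp.sum_congr
  intro d _
  rw [map_smul]

lemma wlen_eq_zero {w : FreeMonoid X} (h : wlen X w = 0) : w = 1 := by
  apply FreeMonoid.toList.injective
  rw [FreeMonoid.toList_one]
  exact List.length_eq_zero_iff.mp h

lemma monoid_split {p q s t : FreeMonoid X} (h : p * s = q * t)
    (hl : wlen X p ≤ wlen X q) : ∃ z, q = p * z ∧ s = z * t := by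
  have h' : FreeMonoid.toList p ++ FreeMonoid.toList s
      = FreeMonoid.toList q ++ FreeMonoid.toList t := by
    rw [← FreeMonoid.toList_mul, ← FreeMonoid.toList_mul, h]
  obtain ⟨z, hz1, hz2⟩ := list_split _ _ _ _ h' hl
  refine ⟨FreeMonoid.ofList z, ?_, ?_⟩
  · apply FreeMonoid.toList.injective
    rw [FreeMonoid.toList_mul, FreeMonoid.toList_ofList, hz1]
  · apply FreeMonoid.toList.injective
    rw [FreeMonoid.toList_mul, FreeMonoid.toList_ofList, hz2]

lemma altProd_one {A : Type*} [Monoid A] (t s : A) : altProd t s 1 = s := by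
  rw [altProd]
  norm_num

lemma altProd_succ {A : Type*} [Monoid A] (t s : A) (j : ℕ) :
    altProd t s (j + 1) = (if Even j then s else t) * altProd t s j := by
  rcases Nat.even_or_odd j with he | ho
  · obtain ⟨i, rfl⟩ := he
    rw [if_pos (show Even (i + i) from ⟨i, rfl⟩), altProd, altProd]
    have h1 : ¬ Even (i + i + 1) := by
      rw [Nat.even_add_one]
      simp only [not_not]
      exact ⟨i, rfl⟩
    rw [if_neg h1, if_pos (show Even (i + i) from ⟨i, rfl⟩)]
    congr 2
    omega
  · obtain ⟨i, rfl⟩ := ho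
    have h1 : ¬ Even (2 * i + 1) := by simp [Nat.even_add_one]
    rw [if_neg (by simp only [Nat.two_mul] at h1 ⊢; exact h1), altProd, altProd, if_neg h1,
      if_pos (show Even (2 * i + 1 + 1) from ⟨i + 1, by ring⟩)]
    have h2 : (2 * i + 1 + 1) / 2 = i + 1 := by omega
    have h3 : (2 * i + 1) / 2 = i := by omega
    rw [h2, h3, pow_succ']
    rw [← mul_assoc]

lemma applyLeft_wd {S : F K X →ₗ[K] F K X} {a b : ℕ} {w : FreeMonoid X}
    (h : wlen X w = a + b) :
    applyLeft K X S a b (wd K X w) =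
      S (wd K X (FreeMonoid.ofList ((FreeMonoid.toList w).take a))) *
        wd K X (FreeMonoid.ofList ((FreeMonoid.toList w).drop a)) := by
  rw [wd, MonoidAlgebra.of_apply, applyLeft]
  erw [lc_comp_single]
  rw [one_smul, if_pos h]

lemma applyRight_wd {S : F K X →ₗ[K] F K X} {a b : ℕ} {w : FreeMonoid X}
    (h : wlen X w = a + b) :
    applyRight K X S a b (wd K X w) =
      wd K X (FreeMonoid.ofList ((FreeMonoid.toList w).take a)) *
        S (wd K X (FreeMonoid.ofList ((FreeMonoid.toList w).drop a))) := by
  rw [wd, MonoidAlgebra.of_apply, applyRight]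
  erw [lc_comp_single]
  rw [one_smul, if_pos h]

lemma take_drop_factor {w p s : FreeMonoid X} {a : ℕ} (h : w = p * s)
    (hp : wlen X p = a) :
    FreeMonoid.ofList ((FreeMonoid.toList w).take a) = p ∧
      FreeMonoid.ofList ((FreeMonoid.toList w).drop a) = s := by
  subst h
  rw [FreeMonoid.toList_mul, ← hp]
  constructor
  · apply FreeMonoid.toList.injective
    rw [FreeMonoid.toList_ofList]
    exact List.take_left
  · apply FreeMonoid.toList.injective
    rw [FreeMonoid.toList_ofList]
    exact List.drop_left

lemma wd_mem_degSub {w : FreeMonoid X} {d : ℕ} (h : wlen X w = d) :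
    wd K X w ∈ degSub K X d := by
  rw [mem_degSub]
  intro t ht
  rw [wd, MonoidAlgebra.of_apply, MonoidAlgebra.coeff_single] at ht
  have := Finsupp.support_single_subset ht
  simp only [Finset.mem_singleton] at this
  rw [this]
  exact h

end CC

namespace CC

open Finsupp MonoidAlgebra

variable {K : Type*} [Field K] {X : Type*} [Fintype X] [LinearOrder X]
variable {N : ℕ} {R : Set (F K X)}

lemma mul_lt_mul_left_word (u : FreeMonoid X) {a b : FreeMonoid X} (h : a < b) :
    u * a < u * b := by
  rw [lt_iff_lex] at h ⊢
  rw [FreeMonoid.toList_mul, FreeMonoid.toList_mul]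
  exact List.Lex.append_left _ h _

lemma mul_lt_mul_right_word {a b : FreeMonoid X} (v v' : FreeMonoid X)
    (h : a < b) (hl : wlen X a = wlen X b) : a * v < b * v' := by
  have := mul_lt_mul_mid 1 v v' h hl
  simpa using this

lemma supp_wd (w : FreeMonoid X) : (wd K X w).coeff.support = {w} := by
  rw [wd, MonoidAlgebra.of_apply, MonoidAlgebra.coeff_single]
  exact Finsupp.support_single_ne_zero w one_ne_zero

lemma supp_mul_wd (f : F K X) (v : FreeMonoid X) :
    (f * wd K X v).coeff.support = f.coeff.support.image (· * v) := by
  classical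
  rw [mul_wd_eq_mapDomain]
  exact Finsupp.mapDomain_support_of_injective (fun a b h => mul_right_cancel h) f.coeff

lemma supp_wd_mul (u : FreeMonoid X) (f : F K X) :
    (wd K X u * f).coeff.support = f.coeff.support.image (u * ·) := by
  classical
  rw [wd_mul_eq_mapDomain]
  exact Finsupp.mapDomain_support_of_injective (fun a b h => mul_left_cancel h) f.coeff

lemma ofList_take_mul_drop (z : FreeMonoid X) (a : ℕ) :
    FreeMonoid.ofList ((FreeMonoid.toList z).take a) *
      FreeMonoid.ofList ((FreeMonoid.toList z).drop a) = z := by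
  apply FreeMonoid.toList.injective
  rw [FreeMonoid.toList_mul, FreeMonoid.toList_ofList, FreeMonoid.toList_ofList]
  exact List.take_append_drop a _

lemma map_sum_single (L : F K X →ₗ[K] F K X) (h : F K X) :
    L h = h.coeff.sum fun z c => c • L (wd K X z) := by
  conv_lhs => rw [← MonoidAlgebra.sum_coeff_single h]
  rw [map_finsuppSum]
  apply Finsupp.sum_congr
  intro z _
  rw [single_eq_smul_wd, map_smul]

section Gd

variable {u1 v2 y w : FreeMonoid X} {m : ℕ}

/-- The two operators are "Φ-invariant" on small words. -/
lemma gd_applyLeft (hhom : NHomogLC1 K X N R) (hred : Reduced K X R) (hwy : w = u1 * y * v2) (hylen : wlen X y = N + m)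
    (IH' : ∀ w' : FreeMonoid X, wlen X w' = wlen X w → w' < w →
      ∀ (u' v' : FreeMonoid X) (g' : F K X), g' ∈ R → w' = u' * lm K X g' * v' →
      Phi R (wd K X u' * (wd K X (lm K X g') - g') * wd K X v') = nfw R w') :
    ∀ z : FreeMonoid X, wlen X z = N + m → z < y →
      (∀ z' ∈ (applyLeft K X (Sop K X R) N m (wd K X z)).coeff.support,
          wlen X z' = N + m ∧ z' ≤ z) ∧
      Phi R (wd K X u1 * applyLeft K X (Sop K X R) N m (wd K X z) * wd K X v2)
        = Phi R (wd K X (u1 * z * v2)) := by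
  intro z hz hzy
  have hlen : wlen X (u1 * z * v2) = wlen X w := by
    rw [hwy, wlen_mul, wlen_mul, wlen_mul, wlen_mul, hz, hylen]
  have hlt : u1 * z * v2 < w := by
    rw [hwy]
    exact mul_lt_mul_mid u1 v2 v2 hzy (hz.trans hylen.symm)
  set pre := FreeMonoid.ofList ((FreeMonoid.toList z).take N) with hpre
  set suf := FreeMonoid.ofList ((FreeMonoid.toList z).drop N) with hsuf
  have hps : pre * suf = z := ofList_take_mul_drop z N
  have hpl : wlen X pre = N := by
    rw [hpre, wlen_ofList, List.length_take]
    rw [wlen] at hz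
    omega
  have hsl : wlen X suf = m := by
    rw [hsuf, wlen_ofList, List.length_drop]
    rw [wlen] at hz
    omega
  have happ : applyLeft K X (Sop K X R) N m (wd K X z)
      = Sop K X R (wd K X pre) * wd K X suf := applyLeft_wd hz
  by_cases hx : ∃ f ∈ R, lm K X f = pre
  · obtain ⟨f, hf, hlf⟩ := hx
    have hSop : Sop K X R (wd K X pre) = wd K X pre - f := by
      rw [← hlf]; exact Sop_wd_lm hhom hred hf
    constructor
    · intro z' hz'
      rw [happ, hSop, ← hlf, supp_mul_wd] at hz'
      obtain ⟨d, hd, rfl⟩ := Finset.mem_image.mp hz'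
      obtain ⟨hd1, hd2⟩ := supp_lead_sub hhom hf d hd
      constructor
      · rw [wlen_mul, hd1, hsl]
      · have : d * suf < lm K X f * suf :=
          mul_lt_mul_right_word suf suf hd2 (by rw [hd1, wlen_lm hhom hf])
        rw [hlf] at this
        rw [← hps]
        exact le_of_lt this
    · have e1 : wd K X u1 * (Sop K X R (wd K X pre) * wd K X suf) * wd K X v2
          = wd K X u1 * (wd K X (lm K X f) - f) * wd K X (suf * v2) := by
        rw [hSop, ← hlf, ← wd_mul]
        simp only [mul_assoc]
      have hword : u1 * z * v2 = u1 * lm K X f * (suf * v2) := by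
        rw [← hps, ← hlf]
        simp only [mul_assoc]
      rw [happ, e1, IH' (u1 * z * v2) hlen hlt u1 (suf * v2) f hf hword, Phi_wd]
  · have hSop : Sop K X R (wd K X pre) = wd K X pre := Sop_wd_of_not hx
    rw [happ, hSop, wd_mul, hps]
    constructor
    · intro z' hz'
      rw [supp_wd, Finset.mem_singleton] at hz'
      subst hz'
      exact ⟨hz, le_rfl⟩
    · rw [wd_mul, wd_mul]

lemma gd_applyRight (hhom : NHomogLC1 K X N R) (hred : Reduced K X R) (hwy : w = u1 * y * v2) (hylen : wlen X y = N + m)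
    (IH' : ∀ w' : FreeMonoid X, wlen X w' = wlen X w → w' < w →
      ∀ (u' v' : FreeMonoid X) (g' : F K X), g' ∈ R → w' = u' * lm K X g' * v' →
      Phi R (wd K X u' * (wd K X (lm K X g') - g') * wd K X v') = nfw R w') :
    ∀ z : FreeMonoid X, wlen X z = N + m → z < y →
      (∀ z' ∈ (applyRight K X (Sop K X R) m N (wd K X z)).coeff.support,
          wlen X z' = N + m ∧ z' ≤ z) ∧
      Phi R (wd K X u1 * applyRight K X (Sop K X R) m N (wd K X z) * wd K X v2)
        = Phi R (wd K X (u1 * z * v2)) := by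
  intro z hz hzy
  have hlen : wlen X (u1 * z * v2) = wlen X w := by
    rw [hwy, wlen_mul, wlen_mul, wlen_mul, wlen_mul, hz, hylen]
  have hlt : u1 * z * v2 < w := by
    rw [hwy]
    exact mul_lt_mul_mid u1 v2 v2 hzy (hz.trans hylen.symm)
  set pre := FreeMonoid.ofList ((FreeMonoid.toList z).take m) with hpre
  set suf := FreeMonoid.ofList ((FreeMonoid.toList z).drop m) with hsuf
  have hps : pre * suf = z := ofList_take_mul_drop z m
  have hpl : wlen X pre = m := by
    rw [hpre, wlen_ofList, List.length_take]
    rw [wlen] at hz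
    omega
  have hsl : wlen X suf = N := by
    rw [hsuf, wlen_ofList, List.length_drop]
    rw [wlen] at hz
    omega
  have happ : applyRight K X (Sop K X R) m N (wd K X z)
      = wd K X pre * Sop K X R (wd K X suf) := applyRight_wd (a := m) (b := N) (by omega)
  by_cases hx : ∃ f ∈ R, lm K X f = suf
  · obtain ⟨f, hf, hlf⟩ := hx
    have hSop : Sop K X R (wd K X suf) = wd K X suf - f := by
      rw [← hlf]; exact Sop_wd_lm hhom hred hf
    constructor
    · intro z' hz'
      rw [happ, hSop, ← hlf, supp_wd_mul] at hz'
      obtain ⟨d, hd, rfl⟩ := Finset.mem_image.mp hz'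
      obtain ⟨hd1, hd2⟩ := supp_lead_sub hhom hf d hd
      constructor
      · rw [wlen_mul, hd1, hpl]; omega
      · have : pre * d < pre * lm K X f := mul_lt_mul_left_word pre hd2
        rw [hlf] at this
        rw [← hps]
        exact le_of_lt this
    · have e1 : wd K X u1 * (wd K X pre * Sop K X R (wd K X suf)) * wd K X v2
          = wd K X (u1 * pre) * (wd K X (lm K X f) - f) * wd K X v2 := by
        rw [hSop, ← hlf, ← wd_mul]
        simp only [mul_assoc]
      have hword : u1 * z * v2 = (u1 * pre) * lm K X f * v2 := by
        rw [← hps, ← hlf]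
        simp only [mul_assoc]
      rw [happ, e1, IH' (u1 * z * v2) hlen hlt (u1 * pre) v2 f hf hword, Phi_wd]
  · have hSop : Sop K X R (wd K X suf) = wd K X suf := Sop_wd_of_not hx
    rw [happ, hSop, wd_mul, hps]
    constructor
    · intro z' hz'
      rw [supp_wd, Finset.mem_singleton] at hz'
      subst hz'
      exact ⟨hz, le_rfl⟩
    · rw [wd_mul, wd_mul]

/-- Lift pointwise Φ-invariance to elements supported on small words. -/
lemma gd_lift (T : F K X →ₗ[K] F K X)
    (hgd : ∀ z : FreeMonoid X, wlen X z = N + m → z < y →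
      (∀ z' ∈ (T (wd K X z)).coeff.support, wlen X z' = N + m ∧ z' ≤ z) ∧
      Phi R (wd K X u1 * T (wd K X z) * wd K X v2) = Phi R (wd K X (u1 * z * v2)))
    (h : F K X) (hs : ∀ z ∈ h.coeff.support, wlen X z = N + m ∧ z < y) :
    (∀ z ∈ (T h).coeff.support, wlen X z = N + m ∧ z < y) ∧
      Phi R (wd K X u1 * T h * wd K X v2) = Phi R (wd K X u1 * h * wd K X v2) := by
  classical
  constructor
  · intro z' hz'
    rw [map_sum_single T h, MonoidAlgebra.coeff_finsuppSum] at hz'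
    have hsub := Finsupp.support_sum hz'
    rw [Finset.mem_biUnion] at hsub
    obtain ⟨z, hz, hz'mem⟩ := hsub
    have hz'' : z' ∈ (T (wd K X z)).coeff.support := Finsupp.support_smul hz'mem
    obtain ⟨hl, hle⟩ := (hgd z (hs z hz).1 (hs z hz).2).1 z' hz''
    exact ⟨hl, lt_of_le_of_lt hle (hs z hz).2⟩
  · set Psi : F K X →ₗ[K] F K X :=
      (Phi R).comp ((LinearMap.mulRight K (wd K X v2)).comp (LinearMap.mulLeft K (wd K X u1)))
      with hPsi
    have hPsiApp : ∀ x : F K X, Psi x = Phi R (wd K X u1 * x * wd K X v2) := fun x => rfl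
    show Phi R (wd K X u1 * T h * wd K X v2) = Phi R (wd K X u1 * h * wd K X v2)
    rw [← hPsiApp, ← hPsiApp]
    rw [show Psi (T h) = (Psi.comp T) h from rfl, map_sum_single (Psi.comp T) h,
      map_sum_single Psi h]
    apply Finsupp.sum_congr
    intro z hz
    congr 1
    show Psi (T (wd K X z)) = Psi (wd K X z)
    rw [hPsiApp, hPsiApp, (hgd z (hs z hz).1 (hs z hz).2).2, wd_mul, wd_mul]

/-- Iterate the alternating product, preserving Φ after multiplication. -/
lemma gd_iter (Ta Tb : F K X →ₗ[K] F K X)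
    (hgda : ∀ z : FreeMonoid X, wlen X z = N + m → z < y →
      (∀ z' ∈ (Ta (wd K X z)).coeff.support, wlen X z' = N + m ∧ z' ≤ z) ∧
      Phi R (wd K X u1 * Ta (wd K X z) * wd K X v2) = Phi R (wd K X (u1 * z * v2)))
    (hgdb : ∀ z : FreeMonoid X, wlen X z = N + m → z < y →
      (∀ z' ∈ (Tb (wd K X z)).coeff.support, wlen X z' = N + m ∧ z' ≤ z) ∧
      Phi R (wd K X u1 * Tb (wd K X z) * wd K X v2) = Phi R (wd K X (u1 * z * v2)))
    (hbase : ∀ z ∈ (Ta (wd K X y)).coeff.support, wlen X z = N + m ∧ z < y) :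
    ∀ j : ℕ, 1 ≤ j →
      (∀ z ∈ ((altProd Tb Ta j) (wd K X y)).coeff.support, wlen X z = N + m ∧ z < y) ∧
      Phi R (wd K X u1 * (altProd Tb Ta j) (wd K X y) * wd K X v2)
        = Phi R (wd K X u1 * Ta (wd K X y) * wd K X v2) := by
  intro j
  induction j with
  | zero => omega
  | succ j ihj =>
    intro _
    by_cases hj : j = 0
    · subst hj
      rw [altProd_one]
      exact ⟨hbase, rfl⟩
    · have hj1 : 1 ≤ j := by omega
      obtain ⟨ihsmall, ihphi⟩ := ihj hj1
      have hstep : altProd Tb Ta (j + 1) (wd K X y)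
          = (if Even j then Ta else Tb) ((altProd Tb Ta j) (wd K X y)) := by
        rw [altProd_succ]
        by_cases he : Even j
        · rw [if_pos he, Module.End.mul_apply]
        · rw [if_neg he, Module.End.mul_apply]
      by_cases he : Even j
      · rw [hstep, if_pos he]
        obtain ⟨s1, p1⟩ := gd_lift Ta hgda _ ihsmall
        exact ⟨s1, p1.trans ihphi⟩
      · rw [hstep, if_neg he]
        obtain ⟨s1, p1⟩ := gd_lift Tb hgdb _ ihsmall
        exact ⟨s1, p1.trans ihphi⟩

end Gd

end CC

namespace CC

open Finsupp MonoidAlgebra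

variable {K : Type*} [Field K] {X : Type*} [Fintype X] [LinearOrder X]
variable {N : ℕ} {R : Set (F K X)}

lemma main_nf (hN : 2 ≤ N) (hhom : NHomogLC1 K X N R) (hred : Reduced K X R)
    (hside : SideConfluent K X N R) :
    ∀ (k : ℕ) (w : FreeMonoid X), mu w = k → ∀ (u v : FreeMonoid X) (g : F K X), g ∈ R →
      w = u * lm K X g * v →
      Phi R (wd K X u * (wd K X (lm K X g) - g) * wd K X v) = nfw R w := by
  intro k
  induction k using Nat.strong_induction_on with
  | _ k IH =>
  intro w hk u v g hg hw
  have IH' : ∀ w' : FreeMonoid X, wlen X w' = wlen X w → w' < w →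
      ∀ (u' v' : FreeMonoid X) (g' : F K X), g' ∈ R → w' = u' * lm K X g' * v' →
      Phi R (wd K X u' * (wd K X (lm K X g') - g') * wd K X v') = nfw R w' := by
    intro w' hl hlt
    exact IH (mu w') (hk ▸ mu_lt_mu hl hlt) w' rfl
  have core : ∀ (u1 v1 : FreeMonoid X) (g1 : F K X), g1 ∈ R → w = u1 * lm K X g1 * v1 →
      ∀ (u2 v2 : FreeMonoid X) (g2 : F K X), g2 ∈ R → w = u2 * lm K X g2 * v2 →
      wlen X u1 ≤ wlen X u2 →
      Phi R (wd K X u1 * (wd K X (lm K X g1) - g1) * wd K X v1) =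
        Phi R (wd K X u2 * (wd K X (lm K X g2) - g2) * wd K X v2) := by
    intro u1 v1 g1 hg1 hw1 u2 v2 g2 hg2 hw2 hle
    have hN1 : wlen X (lm K X g1) = N := wlen_lm hhom hg1
    have hN2 : wlen X (lm K X g2) = N := wlen_lm hhom hg2
    have h12 : u1 * (lm K X g1 * v1) = u2 * (lm K X g2 * v2) := by
      simp only [← mul_assoc]
      rw [← hw1, ← hw2]
    obtain ⟨c, hc1, hc2⟩ := monoid_split h12 hle
    by_cases hm0 : wlen X c = 0
    -- Case A : the two reductions coincide
    · have hc : c = 1 := wlen_eq_zero hm0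
      rw [hc, mul_one] at hc1
      rw [hc, one_mul] at hc2
      obtain ⟨z, hz1, hz2⟩ := monoid_split hc2 (by rw [hN1, hN2])
      have hzlen : wlen X z = 0 := by
        have := hN2
        rw [hz1, wlen_mul, hN1] at this
        omega
      have hz : z = 1 := wlen_eq_zero hzlen
      rw [hz, mul_one] at hz1
      rw [hz, one_mul] at hz2
      have hgg : g1 = g2 := lm_injOn hhom hred hg1 hg2 hz1.symm
      rw [hc1, hz2, hgg]
    by_cases hmN : N ≤ wlen X c
    -- Case B : disjoint occurrences
    · obtain ⟨z, hz1, hz2⟩ := monoid_split (p := lm K X g1) (q := c) hc2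
        (by rw [hN1]; exact hmN)
      -- hz1 : c = lm g1 * z, hz2 : v1 = z * (lm g2 * v2)
      have hu2 : u2 = u1 * (lm K X g1 * z) := by rw [hc1, hz1]
      have key1 : Phi R (wd K X u1 * (wd K X (lm K X g1) - g1) * wd K X v1)
          = (wd K X (lm K X g1) - g1).coeff.sum fun d cd =>
              (wd K X (lm K X g2) - g2).coeff.sum fun e ce =>
                cd • ce • nfw R (u1 * d * z * e * v2) := by
        rw [map_conj_sum]
        apply Finsupp.sum_congr
        intro d hd
        obtain ⟨hd1, hd2⟩ := supp_lead_sub hhom hg1 d hd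
        have hlen' : wlen X (u1 * d * v1) = wlen X w := by
          rw [hw1, wlen_mul, wlen_mul, wlen_mul, wlen_mul, hd1, hN1]
        have hlt' : u1 * d * v1 < w := by
          rw [hw1]
          exact mul_lt_mul_mid u1 v1 v1 hd2 (by rw [hd1, hN1])
        have hdec : u1 * d * v1 = (u1 * d * z) * lm K X g2 * v2 := by
          rw [hz2]; simp only [mul_assoc]
        rw [Phi_wd, ← IH' _ hlen' hlt' (u1 * d * z) v2 g2 hg2 hdec, map_conj_sum,
          Finsupp.smul_sum]
        apply Finsupp.sum_congr
        intro e _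
        rw [Phi_wd]
      have key2 : Phi R (wd K X u2 * (wd K X (lm K X g2) - g2) * wd K X v2)
          = (wd K X (lm K X g2) - g2).coeff.sum fun e ce =>
              (wd K X (lm K X g1) - g1).coeff.sum fun d cd =>
                ce • cd • nfw R (u1 * d * z * e * v2) := by
        rw [map_conj_sum]
        apply Finsupp.sum_congr
        intro e he
        obtain ⟨he1, he2⟩ := supp_lead_sub hhom hg2 e he
        have hlen' : wlen X (u2 * e * v2) = wlen X w := by
          rw [hw2, wlen_mul, wlen_mul, wlen_mul, wlen_mul, he1, hN2]
        have hlt' : u2 * e * v2 < w := by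
          rw [hw2]
          exact mul_lt_mul_mid u2 v2 v2 he2 (by rw [he1, hN2])
        have hdec : u2 * e * v2 = u1 * lm K X g1 * (z * (e * v2)) := by
          rw [hu2]; simp only [mul_assoc]
        rw [Phi_wd, ← IH' _ hlen' hlt' u1 (z * (e * v2)) g1 hg1 hdec, map_conj_sum,
          Finsupp.smul_sum]
        apply Finsupp.sum_congr
        intro d _
        rw [Phi_wd]
        congr 2
        simp only [mul_assoc]
      rw [key1, key2, Finsupp.sum_comm]
      apply Finsupp.sum_congr
      intro e _
      apply Finsupp.sum_congr
      intro d _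
      rw [smul_comm]
    -- Case C : overlapping occurrences
    · have hm1 : 1 ≤ wlen X c := by omega
      have hmN' : wlen X c < N := by omega
      obtain ⟨s0, hs1, hs2⟩ := monoid_split (p := c) (q := lm K X g1) hc2.symm
        (by rw [hN1]; omega)
      -- hs1 : lm g1 = c * s0, hs2 : lm g2 * v2 = s0 * v1
      have hs0len : wlen X s0 = N - wlen X c := by
        have := hN1
        rw [hs1, wlen_mul] at this
        omega
      obtain ⟨q0, hq1, hq2⟩ := monoid_split (p := s0) (q := lm K X g2) hs2.symm
        (by rw [hN2]; omega)
      -- hq1 : lm g2 = s0 * q0, hq2 : v1 = q0 * v2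
      have hq0len : wlen X q0 = wlen X c := by
        have := hN2
        rw [hq1, wlen_mul, hs0len] at this
        omega
      have hy2 : lm K X g1 * q0 = c * lm K X g2 := by
        rw [hs1, hq1]; simp only [mul_assoc]
      have hylen : wlen X (lm K X g1 * q0) = N + wlen X c := by
        rw [wlen_mul, hN1, hq0len]
      have hwy : w = u1 * (lm K X g1 * q0) * v2 := by
        rw [hw1, hq2]; simp only [mul_assoc]
      have F1 : applyLeft K X (Sop K X R) N (wlen X c) (wd K X (lm K X g1 * q0))
          = (wd K X (lm K X g1) - g1) * wd K X q0 := by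
        rw [applyLeft_wd hylen]
        obtain ⟨hta, htb⟩ := take_drop_factor (rfl : lm K X g1 * q0 = lm K X g1 * q0) hN1
        rw [hta, htb, Sop_wd_lm hhom hred hg1]
      have F2 : applyRight K X (Sop K X R) (wlen X c) N (wd K X (lm K X g1 * q0))
          = wd K X c * (wd K X (lm K X g2) - g2) := by
        rw [applyRight_wd (a := wlen X c) (b := N) (by omega)]
        obtain ⟨hta, htb⟩ := take_drop_factor hy2 rfl
        rw [hta, htb, Sop_wd_lm hhom hred hg2]
      have hbase1 : ∀ z ∈ ((applyLeft K X (Sop K X R) N (wlen X c))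
          (wd K X (lm K X g1 * q0))).coeff.support,
          wlen X z = N + wlen X c ∧ z < lm K X g1 * q0 := by
        rw [F1]
        intro z hz
        rw [supp_mul_wd] at hz
        obtain ⟨d, hd, rfl⟩ := Finset.mem_image.mp hz
        obtain ⟨hd1, hd2⟩ := supp_lead_sub hhom hg1 d hd
        exact ⟨by rw [wlen_mul, hd1, hq0len],
          mul_lt_mul_right_word q0 q0 hd2 (by rw [hd1, hN1])⟩
      have hbase2 : ∀ z ∈ ((applyRight K X (Sop K X R) (wlen X c) N)
          (wd K X (lm K X g1 * q0))).coeff.support,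
          wlen X z = N + wlen X c ∧ z < lm K X g1 * q0 := by
        rw [F2]
        intro z hz
        rw [supp_wd_mul] at hz
        obtain ⟨e, he, rfl⟩ := Finset.mem_image.mp hz
        obtain ⟨he1, he2⟩ := supp_lead_sub hhom hg2 e he
        refine ⟨by rw [wlen_mul, he1]; omega, ?_⟩
        · rw [hy2]
          exact mul_lt_mul_left_word c he2
      have gd1 := gd_applyLeft hhom hred hwy hylen IH'
      have gd2 := gd_applyRight hhom hred hwy hylen IH'
      obtain ⟨kk, hk1, hkeq⟩ := hside (wlen X c) hm1 (by omega)
      have heq := hkeq (wd K X (lm K X g1 * q0)) (wd_mem_degSub hylen)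
      have A1 := gd_iter (applyLeft K X (Sop K X R) N (wlen X c))
        (applyRight K X (Sop K X R) (wlen X c) N) gd1 gd2 hbase1 kk hk1
      have A2 := gd_iter (applyRight K X (Sop K X R) (wlen X c) N)
        (applyLeft K X (Sop K X R) N (wlen X c)) gd2 gd1 hbase2 kk hk1
      have E1eq : wd K X u1 * (wd K X (lm K X g1) - g1) * wd K X v1
          = wd K X u1 * ((applyLeft K X (Sop K X R) N (wlen X c))
              (wd K X (lm K X g1 * q0))) * wd K X v2 := by
        rw [F1, hq2, ← wd_mul]
        simp only [mul_assoc]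
      have E2eq : wd K X u2 * (wd K X (lm K X g2) - g2) * wd K X v2
          = wd K X u1 * ((applyRight K X (Sop K X R) (wlen X c) N)
              (wd K X (lm K X g1 * q0))) * wd K X v2 := by
        rw [F2, hc1, ← wd_mul]
        simp only [mul_assoc]
      rw [E1eq, E2eq, ← A1.2, ← A2.2, heq]
    -- end core
  have hRed : RedW R w := ⟨(u, v, g), hg, hw⟩
  obtain ⟨u0, v0, g0, hg0, hw0, hr0⟩ := reduct_spec hRed
  have h1 : nfw R w = Phi R (reduct R w) := by
    rw [nfw_of_red hhom hRed, Phi_apply]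
  rw [h1, hr0]
  rcases le_total (wlen X u) (wlen X u0) with hle | hle
  · exact core u v g hg hw u0 v0 g0 hg0 hw0 hle
  · exact (core u0 v0 g0 hg0 hw0 u v g hg hw hle).symm

end CC

namespace CC

open Finsupp MonoidAlgebra

variable {K : Type*} [Field K] {X : Type*} [Fintype X] [LinearOrder X]
variable {N : ℕ} {R : Set (F K X)}

lemma supp_conj_lead (hhom : NHomogLC1 K X N R) {g : F K X} (hg : g ∈ R)
    (u v : FreeMonoid X) :
    ∀ w' ∈ (wd K X u * (wd K X (lm K X g) - g) * wd K X v).coeff.support,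
      wlen X w' = wlen X (u * lm K X g * v) ∧ w' < u * lm K X g * v := by
  intro w' hw'
  rw [conj_support, Finset.mem_image] at hw'
  obtain ⟨d, hd, rfl⟩ := hw'
  obtain ⟨hd1, hd2⟩ := supp_lead_sub hhom hg d hd
  constructor
  · rw [wlen_mul, wlen_mul, wlen_mul, wlen_mul, hd1, wlen_lm hhom hg]
  · exact mul_lt_mul_mid u v v hd2 (by rw [hd1, wlen_lm hhom hg])

section Main

variable (hN : 2 ≤ N) (hhom : NHomogLC1 K X N R) (hred : Reduced K X R)
    (hside : SideConfluent K X N R)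

lemma Phi_conj_g (hN : 2 ≤ N) (hhom : NHomogLC1 K X N R) (hred : Reduced K X R)
    (hside : SideConfluent K X N R) (u v : FreeMonoid X) {g : F K X} (hg : g ∈ R) :
    Phi R (wd K X u * g * wd K X v) = 0 := by
  have hdecomp : wd K X u * g * wd K X v
      = wd K X (u * lm K X g * v) - wd K X u * (wd K X (lm K X g) - g) * wd K X v := by
    rw [← wd_mul, ← wd_mul, mul_sub, sub_mul, sub_sub_cancel]
  rw [hdecomp, map_sub, Phi_wd,
    main_nf hN hhom hred hside (mu (u * lm K X g * v)) _ rfl u v g hg rfl, sub_self]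

lemma Phi_redMap (hN : 2 ≤ N) (hhom : NHomogLC1 K X N R) (hred : Reduced K X R)
    (hside : SideConfluent K X N R) (u v : FreeMonoid X) {g : F K X} (hg : g ∈ R)
    (f : F K X) : Phi R (redMap K X u g v f) = Phi R f := by
  rw [redMap_apply, map_sub, map_smul, Phi_conj_g hN hhom hred hside u v hg, smul_zero,
    sub_zero]

lemma Phi_foldr (hN : 2 ≤ N) (hhom : NHomogLC1 K X N R) (hred : Reduced K X R)
    (hside : SideConfluent K X N R) (L : List (FreeMonoid X × F K X × FreeMonoid X))
    (hL : ∀ p ∈ L, p.2.1 ∈ R) (f : F K X) :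
    Phi R (L.foldr (fun p h => redMap K X p.1 p.2.1 p.2.2 h) f) = Phi R f := by
  induction L with
  | nil => rfl
  | cons p L ihL =>
    rw [List.foldr_cons, Phi_redMap hN hhom hred hside p.1 p.2.2 (hL p (by simp))]
    exact ihL (fun q hq => hL q (by simp [hq]))

lemma redMap_diff_mem (u v : FreeMonoid X) {g : F K X} (hg : g ∈ R) (f : F K X) :
    f - redMap K X u g v f ∈ idealSpan K X R := by
  rw [redMap_apply, sub_sub_cancel]
  exact Submodule.smul_mem _ _ (Submodule.subset_span ⟨u, v, g, hg, rfl⟩)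

lemma foldr_diff_mem (L : List (FreeMonoid X × F K X × FreeMonoid X))
    (hL : ∀ p ∈ L, p.2.1 ∈ R) (f : F K X) :
    f - L.foldr (fun p h => redMap K X p.1 p.2.1 p.2.2 h) f ∈ idealSpan K X R := by
  induction L with
  | nil => simp
  | cons p L ihL =>
    rw [List.foldr_cons]
    have h1 := ihL (fun q hq => hL q (by simp [hq]))
    have h2 := redMap_diff_mem p.1 p.2.2 (hL p (by simp))
      (L.foldr (fun p h => redMap K X p.1 p.2.1 p.2.2 h) f)
    have := Submodule.add_mem _ h1 h2
    simpa using this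

lemma Phi_vanish_ideal (hN : 2 ≤ N) (hhom : NHomogLC1 K X N R) (hred : Reduced K X R)
    (hside : SideConfluent K X N R) {h : F K X} (hh : h ∈ idealSpan K X R) :
    Phi R h = 0 := by
  induction hh using Submodule.span_induction with
  | mem x hx =>
    obtain ⟨u, v, g, hg, rfl⟩ := hx
    exact Phi_conj_g hN hhom hred hside u v hg
  | zero => simp
  | add x y _ _ ihx ihy => rw [map_add, ihx, ihy, add_zero]
  | smul c x _ ihx => rw [map_smul, ihx, smul_zero]

/-- The termination measure. -/
noncomputable def nu (f : F K X) : ℕ := ∑ w ∈ f.coeff.support, 2 ^ (mu w + 1)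

lemma sum_Icc_two_pow (n : ℕ) : ∑ j ∈ Finset.Icc 1 n, 2 ^ j = 2 ^ (n + 1) - 2 := by
  induction n with
  | zero => simp
  | succ n ihn =>
    rw [Finset.sum_Icc_succ_top (by omega), ihn]
    have : 2 ≤ 2 ^ (n + 1) := by
      have := Nat.one_le_two_pow (n := n)
      calc 2 = 2 * 1 := by ring
        _ ≤ 2 * 2 ^ n := by omega
        _ = 2 ^ (n + 1) := by rw [pow_succ]; ring
    rw [pow_succ]
    omega

lemma nat_sum_union_le {α : Type*} [DecidableEq α] (A B : Finset α) (f : α → ℕ) :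
    ∑ x ∈ A ∪ B, f x ≤ ∑ x ∈ A, f x + ∑ x ∈ B, f x := by
  rw [← Finset.union_sdiff_self_eq_union, Finset.sum_union Finset.disjoint_sdiff]
  have : ∑ x ∈ B \ A, f x ≤ ∑ x ∈ B, f x :=
    Finset.sum_le_sum_of_subset (Finset.sdiff_subset)
  omega

lemma nu_redMap_lt (hhom : NHomogLC1 K X N R) {f : F K X} (u v : FreeMonoid X)
    {g : F K X} (hg : g ∈ R) (ht : f (u * lm K X g * v) ≠ 0) :
    nu (redMap K X u g v f) < nu f := by
  classical
  have hdecomp : wd K X u * g * wd K X v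
      = wd K X (u * lm K X g * v) - wd K X u * (wd K X (lm K X g) - g) * wd K X v := by
    rw [← wd_mul, ← wd_mul, mul_sub, sub_mul, sub_sub_cancel]
  set t := u * lm K X g * v with htdef
  set E := wd K X u * (wd K X (lm K X g) - g) * wd K X v with hE
  have htmem : t ∈ f.coeff.support := Finsupp.mem_support_iff.mpr ht
  have happly : ∀ w : FreeMonoid X, (redMap K X u g v f) w
      = f w - f t * ((wd K X t) w - E w) := by
    intro w
    rw [redMap_apply, hdecomp]
    rw [MonoidAlgebra.coeff_sub, Finsupp.sub_apply, MonoidAlgebra.coeff_smul, Finsupp.smul_apply,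
      MonoidAlgebra.coeff_sub, Finsupp.sub_apply, smul_eq_mul]
  have hsupp : (redMap K X u g v f).coeff.support ⊆ (f.coeff.support.erase t) ∪ E.coeff.support := by
    intro w hw
    rw [Finset.mem_union]
    have hco : (redMap K X u g v f) w ≠ 0 := Finsupp.mem_support_iff.mp hw
    rw [happly w] at hco
    by_cases hwt : w = t
    · right
      subst hwt
      rw [wd_apply, if_pos rfl] at hco
      rw [Finsupp.mem_support_iff]
      intro hEw
      rw [hEw] at hco
      simp at hco
    · by_cases hwf : w ∈ f.coeff.support
      · left
        exact Finset.mem_erase.mpr ⟨hwt, hwf⟩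
      · right
        rw [Finsupp.notMem_support_iff.mp hwf, wd_apply, if_neg hwt] at hco
        rw [Finsupp.mem_support_iff]
        intro hEw
        rw [hEw] at hco
        simp at hco
  have hElow : ∀ w ∈ E.coeff.support, wlen X w = wlen X t ∧ w < t :=
    supp_conj_lead hhom hg u v
  have hEbound : ∑ w ∈ E.coeff.support, 2 ^ (mu w + 1) ≤ 2 ^ (mu t + 1) - 2 := by
    have hinj : ∀ x ∈ E.coeff.support, ∀ y ∈ E.coeff.support, mu x + 1 = mu y + 1 → x = y := by
      intro x hx y hy hxy
      by_contra hne
      rcases lt_or_gt_of_ne hne with h | h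
      · have := mu_lt_mu ((hElow x hx).1.trans (hElow y hy).1.symm) h
        omega
      · have := mu_lt_mu ((hElow y hy).1.trans (hElow x hx).1.symm) h
        omega
    rw [← Finset.sum_image (f := fun j => 2 ^ j) hinj]
    have hsub : E.coeff.support.image (fun w => mu w + 1) ⊆ Finset.Icc 1 (mu t) := by
      intro j hj
      rw [Finset.mem_image] at hj
      obtain ⟨w, hw, rfl⟩ := hj
      have := mu_lt_mu (hElow w hw).1 (hElow w hw).2
      rw [Finset.mem_Icc]
      omega
    calc ∑ j ∈ E.coeff.support.image (fun w => mu w + 1), 2 ^ j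
        ≤ ∑ j ∈ Finset.Icc 1 (mu t), 2 ^ j := Finset.sum_le_sum_of_subset hsub
      _ = 2 ^ (mu t + 1) - 2 := sum_Icc_two_pow (mu t)
  have h6 : ∑ w ∈ (redMap K X u g v f).coeff.support, 2 ^ (mu w + 1)
      ≤ ∑ w ∈ (f.coeff.support.erase t) ∪ E.coeff.support, 2 ^ (mu w + 1) :=
    Finset.sum_le_sum_of_subset hsupp
  have h7 : ∑ w ∈ (f.coeff.support.erase t) ∪ E.coeff.support, 2 ^ (mu w + 1)
      ≤ ∑ w ∈ f.coeff.support.erase t, 2 ^ (mu w + 1) + ∑ w ∈ E.coeff.support, 2 ^ (mu w + 1) :=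
    nat_sum_union_le _ _ _
  have h8 : ∑ w ∈ f.coeff.support.erase t, 2 ^ (mu w + 1) + 2 ^ (mu t + 1)
      = ∑ w ∈ f.coeff.support, 2 ^ (mu w + 1) :=
    Finset.sum_erase_add _ _ htmem
  have h9 : 2 ≤ 2 ^ (mu t + 1) := by
    have h10 := Nat.one_le_two_pow (n := mu t)
    calc 2 = 2 * 1 := by ring
      _ ≤ 2 * 2 ^ (mu t) := by omega
      _ = 2 ^ (mu t + 1) := by rw [pow_succ]; ring
  show (∑ w ∈ (redMap K X u g v f).coeff.support, 2 ^ (mu w + 1))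
      < ∑ w ∈ f.coeff.support, 2 ^ (mu w + 1)
  omega

lemma exists_chain (hN : 2 ≤ N) (hhom : NHomogLC1 K X N R) (hred : Reduced K X R)
    (hside : SideConfluent K X N R) :
    ∀ (n : ℕ) (f : F K X), nu f = n →
      ∃ L : List (FreeMonoid X × F K X × FreeMonoid X),
        (∀ p ∈ L, p.2.1 ∈ R) ∧
        Phi R f = L.foldr (fun p h => redMap K X p.1 p.2.1 p.2.2 h) f := by
  intro n
  induction n using Nat.strong_induction_on with
  | _ n IHn =>
  intro f hn
  by_cases hnf : IsNormalForm K X R f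
  · refine ⟨[], by simp, ?_⟩
    rw [List.foldr_nil]
    apply Phi_of_supp_not_red
    intro w hw hRw
    exact Finsupp.mem_support_iff.mp hw ((isNormalForm_iff_coeff hhom).mp hnf w hRw)
  · rw [isNormalForm_iff hhom] at hnf
    push_neg at hnf
    obtain ⟨u, v, g, hg, ht⟩ := hnf
    have hlt := nu_redMap_lt hhom u v hg ht
    obtain ⟨L', hL'1, hL'2⟩ := IHn (nu (redMap K X u g v f)) (hn ▸ hlt) _ rfl
    refine ⟨L' ++ [(u, g, v)], ?_, ?_⟩
    · intro p hp
      rcases List.mem_append.mp hp with h | h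
      · exact hL'1 p h
      · simp at h
        rw [h]
        exact hg
    · rw [List.foldr_append, List.foldr_cons, List.foldr_nil]
      rw [← hL'2, Phi_redMap hN hhom hred hside u v hg]

lemma nf_unique (hN : 2 ≤ N) (hhom : NHomogLC1 K X N R) (hred : Reduced K X R)
    (hside : SideConfluent K X N R) {f g : F K X} (hfg : NormalFormOf K X R f g) :
    g = Phi R f := by
  obtain ⟨hnf, L, hL, rfl⟩ := hfg
  rw [← Phi_foldr hN hhom hred hside L hL f]
  symm
  apply Phi_of_supp_not_red
  intro w hw hRw
  exact Finsupp.mem_support_iff.mp hw ((isNormalForm_iff_coeff hhom).mp hnf w hRw)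

lemma wd_isNormalForm_of_not_red {w : FreeMonoid X} (hhom : NHomogLC1 K X N R)
    (h : ¬ RedW R w) : IsNormalForm K X R (wd K X w) := by
  rw [isNormalForm_iff_coeff hhom]
  intro t ht
  rw [wd_apply, if_neg]
  intro he
  exact h (he ▸ ht)

lemma not_red_of_isNormalForm {w : FreeMonoid X} (hhom : NHomogLC1 K X N R)
    (h : IsNormalForm K X R (wd K X w)) : ¬ RedW R w := by
  intro hRw
  have := (isNormalForm_iff_coeff hhom).mp h w hRw
  rw [wd_apply, if_pos rfl] at this
  exact one_ne_zero this

end Main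

end CC

open CC in
/-- Diamond Lemma for side-confluent presentations.  Suppose the reduced
`N`-homogeneous presentation `⟨X|R⟩` (leading coefficients `1`) is side-confluent.  Then:
(1) every element of `K⟨X⟩` admits a unique normal form for `⟨X|R⟩`;
(2) the images in `A = K⟨X⟩/I(R)` of the words that are normal forms form a `K`-basis of `A`;
(3) an element `f` of `K⟨X⟩` belongs to `I(R)` if and only if its normal form equals `0`. -/
theorem stmt5 (K : Type*) [Field K] (X : Type*) [Fintype X] [LinearOrder X]
    (N : ℕ) (hN : 2 ≤ N) (R : Set (F K X))
    (hhom : NHomogLC1 K X N R) (hred : Reduced K X R)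
    (hside : SideConfluent K X N R) :
    (∀ f : F K X, ∃! g : F K X, NormalFormOf K X R f g) ∧
    (LinearIndependent K
        (fun w : {w : FreeMonoid X // IsNormalForm K X R (wd K X w)} =>
          (idealSpan K X R).mkQ (wd K X w.1)) ∧
      Submodule.span K
        (Set.range (fun w : {w : FreeMonoid X // IsNormalForm K X R (wd K X w)} =>
          (idealSpan K X R).mkQ (wd K X w.1))) = ⊤) ∧
    (∀ f g : F K X, NormalFormOf K X R f g → (f ∈ idealSpan K X R ↔ g = 0)) := by
  refine ⟨?_, ⟨?_, ?_⟩, ?_⟩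
  · -- (1) existence and uniqueness of normal forms
    intro f
    refine ⟨Phi R f, ⟨Phi_isNormalForm hhom _, ?_⟩,
      fun g hg => nf_unique hN hhom hred hside hg⟩
    obtain ⟨L, hL, hPhi⟩ := exists_chain hN hhom hred hside (nu f) f rfl
    exact ⟨L, hL, hPhi⟩
  · -- (2a) linear independence
    rw [linearIndependent_iff]
    intro l hl
    set h := Finsupp.linearCombination K
      (fun w : {w : FreeMonoid X // IsNormalForm K X R (wd K X w)} => wd K X w.1) l with hh
    have h1 : (idealSpan K X R).mkQ h = 0 := by
      rw [hh, Finsupp.apply_linearCombination]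
      exact hl
    have h2 : h ∈ idealSpan K X R := by
      rw [← Submodule.Quotient.mk_eq_zero]
      exact h1
    have h3 : Phi R h = 0 := Phi_vanish_ideal hN hhom hred hside h2
    have h4 : Phi R h = h := by
      apply Phi_of_supp_not_red
      intro w0 hw0 hRw
      rw [hh] at hw0
      erw [Finsupp.linearCombination_apply] at hw0
      rw [MonoidAlgebra.coeff_finsuppSum] at hw0
      have hsum := Finsupp.support_sum hw0
      rw [Finset.mem_biUnion] at hsum
      obtain ⟨w, hwl, hmem⟩ := hsum
      have hmem2 : w0 ∈ (wd K X w.1).coeff.support := Finsupp.support_smul hmem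
      rw [supp_wd, Finset.mem_singleton] at hmem2
      subst hmem2
      exact not_red_of_isNormalForm hhom w.2 hRw
    have h5 : h = 0 := by rw [← h4, h3]
    have h7 : ∀ w : {w : FreeMonoid X // IsNormalForm K X R (wd K X w)}, h w.1 = l w := by
      intro w
      rw [hh]
      erw [Finsupp.linearCombination_apply, MonoidAlgebra.coeff_finsuppSum, Finsupp.sum_apply]
      show (∑ b ∈ l.support, (l b • wd K X b.1) w.1) = l w
      rw [Finset.sum_eq_single w]
      · show l w • (wd K X w.1) w.1 = l w
        rw [wd_apply, if_pos rfl, smul_eq_mul, mul_one]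
      · intro b _ hne
        show l b • (wd K X b.1) w.1 = 0
        rw [wd_apply, if_neg (fun hbw => hne (Subtype.ext hbw.symm)), smul_eq_mul, mul_zero]
      · intro hnotmem
        show l w • (wd K X w.1) w.1 = 0
        rw [Finsupp.notMem_support_iff.mp hnotmem, zero_smul]
    ext w
    rw [← h7 w, h5]
    rfl
  · -- (2b) spanning
    rw [eq_top_iff]
    rintro x -
    obtain ⟨f, rfl⟩ := Submodule.mkQ_surjective _ x
    have hdiff : f - Phi R f ∈ idealSpan K X R := by
      obtain ⟨L, hL, hPhi⟩ := exists_chain hN hhom hred hside (nu f) f rfl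
      rw [hPhi]
      exact foldr_diff_mem L hL f
    have hmk : (idealSpan K X R).mkQ f = (idealSpan K X R).mkQ (Phi R f) := by
      rw [Submodule.mkQ_apply, Submodule.mkQ_apply, Submodule.Quotient.eq]
      exact hdiff
    rw [hmk]
    have hexp : Phi R f = (Phi R f).coeff.sum fun w c => c • wd K X w := by
      conv_lhs => rw [← MonoidAlgebra.sum_coeff_single (Phi R f)]
      apply Finsupp.sum_congr
      intro w _
      rw [single_eq_smul_wd]
    rw [hexp, map_finsuppSum]
    apply Submodule.sum_mem
    intro w hw
    show (idealSpan K X R).mkQ ((Phi R f) w • wd K X w) ∈ _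
    rw [map_smul]
    apply Submodule.smul_mem
    have hnw : ¬ RedW R w := by
      intro hRw
      exact Finsupp.mem_support_iff.mp hw (Phi_coeff hhom f hRw)
    apply Submodule.subset_span
    exact ⟨⟨w, wd_isNormalForm_of_not_red hhom hnw⟩, rfl⟩
  · -- (3)
    intro f g hfg
    have hg := nf_unique hN hhom hred hside hfg
    subst hg
    constructor
    · intro hf
      exact Phi_vanish_ideal hN hhom hred hside hf
    · intro h0
      obtain ⟨L, hL, hPhi⟩ := exists_chain hN hhom hred hside (nu f) f rfl
      have hmem := foldr_diff_mem L hL f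
      rw [← hPhi, h0, sub_zero] at hmem
      exact hmem
end
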